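/- arXiv:2307.15726 — 2 statements merged into one kernel-verified Lean document; each statement's English description precedes it below -/
import Mathlib

section
/- Let (W,S) be a Coxeter system and let I_• = [I_0, …, I_d] be a singlestep expression (each I_i finitary and I_{i+1} = I_i ∪ {s} or I_i \ {s} for some s ∈ S). The expression I_• expresses the unique (I_0,I_d)-coset p with max(p) = w_{I_0} * w_{I_1} * ⋯ * w_{I_d} (Demazure products of longest elements). Then for any path p_• = [p_0,…,p_d] subordinate to I_•, the terminus p_d satisfies p_d ≤ p in the Bruhat order on (I_0,I_d)-cosets. -/
namespace CoxeterPaper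

open CoxeterSystem List

variable {B : Type*} {W : Type*} [Group W] {M : CoxeterMatrix B}

/-- The Bruhat order on a Coxeter group: the reflexive-transitive closure of the
relation `a < a * t` for `t` a reflection with length increasing. -/
def BruhatLE (cs : CoxeterSystem M W) (x y : W) : Prop :=
  Relation.ReflTransGen
    (fun a b => (∃ t, cs.IsReflection t ∧ b = a * t) ∧ cs.length a < cs.length b) x y

/-- One step of the Demazure product with a simple reflection. -/
noncomputable def demStep (cs : CoxeterSystem M W) (x : W) (i : B) : W :=
  if cs.length x < cs.length (x * cs.simple i) then x * cs.simple i else x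

/-- The Demazure product of `x` with the word `l`. -/
noncomputable def demWord (cs : CoxeterSystem M W) (x : W) (l : List B) : W :=
  l.foldl (demStep cs) x

/-- The Demazure product (Coxeter monoid product) of two elements: fold the
Demazure action of a reduced word of `y` onto `x`. -/
noncomputable def dem (cs : CoxeterSystem M W) (x y : W) : W :=
  demWord cs x (Classical.choose (cs.exists_reduced_word y))

/-- The standard parabolic subgroup attached to a set of simple indices. -/
def parabolic (cs : CoxeterSystem M W) (I : Set B) : Subgroup W :=
  Subgroup.closure (cs.simple '' I)

/-- `I` is finitary if the parabolic subgroup `W_I` is finite. -/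
def Finitary (cs : CoxeterSystem M W) (I : Set B) : Prop :=
  (parabolic cs I : Set W).Finite

/-- The double coset `W_I w W_J` as a subset of `W`. -/
def doset (cs : CoxeterSystem M W) (I J : Set B) (w : W) : Set W :=
  {x | ∃ a ∈ parabolic cs I, ∃ b ∈ parabolic cs J, x = a * w * b}

/-- `p` is an `(I,J)`-double coset. -/
def IsDCoset (cs : CoxeterSystem M W) (I J : Set B) (p : Set W) : Prop :=
  ∃ w, p = doset cs I J w

/-- `m` is the Bruhat-minimal element of `p`. -/
def IsMinOf (cs : CoxeterSystem M W) (p : Set W) (m : W) : Prop :=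
  m ∈ p ∧ ∀ x ∈ p, BruhatLE cs m x

/-- `m` is the Bruhat-maximal element of `p`. -/
def IsMaxOf (cs : CoxeterSystem M W) (p : Set W) (m : W) : Prop :=
  m ∈ p ∧ ∀ x ∈ p, BruhatLE cs x m

/-- `[I 0, …, I d]` is a singlestep expression. -/
def IsSinglestep (I : ℕ → Set B) (d : ℕ) : Prop :=
  ∀ k < d, (∃ s, s ∉ I k ∧ I (k + 1) = insert s (I k)) ∨
    (∃ s, s ∈ I k ∧ I (k + 1) = I k \ {s})

/-- `p` is a path subordinate to the singlestep expression `[I 0, …, I d]`. -/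
def IsSubPath (cs : CoxeterSystem M W) (I : ℕ → Set B) (d : ℕ) (p : ℕ → Set W) : Prop :=
  p 0 = doset cs (I 0) (I 0) 1 ∧
  (∀ i ≤ d, IsDCoset cs (I 0) (I i) (p i)) ∧
  ∀ k < d, (I k ⊆ I (k + 1) → p k ⊆ p (k + 1)) ∧ (I (k + 1) ⊆ I k → p (k + 1) ⊆ p k)

/-- The Demazure product `w_{I_0} * w_{I_1} * ⋯ * w_{I_d}` of the longest elements
`wI 0, …, wI d`. -/
noncomputable def exprMax (cs : CoxeterSystem M W) (wI : ℕ → W) (d : ℕ) : W :=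
  ((List.range d).map fun k => wI (k + 1)).foldl (dem cs) (wI 0)


open scoped Classical in
/-- Parity count of `t` in a list. -/
noncomputable def cnt (l : List W) (t : W) : ZMod 2 :=
  (l.map (fun u => if u = t then (1 : ZMod 2) else 0)).sum

@[simp] theorem cnt_nil (t : W) : cnt ([] : List W) t = 0 := rfl

open scoped Classical in
theorem cnt_cons (x : W) (l : List W) (t : W) :
    cnt (x :: l) t = (if x = t then (1 : ZMod 2) else 0) + cnt l t := by
  simp [cnt]

theorem cnt_append (l₁ l₂ : List W) (t : W) :
    cnt (l₁ ++ l₂) t = cnt l₁ t + cnt l₂ t := by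
  simp [cnt]

theorem cnt_reverse (l : List W) (t : W) : cnt l.reverse t = cnt l t := by
  simp [cnt]

theorem cnt_eq_zero_of_not_mem {l : List W} {t : W} (h : t ∉ l) : cnt l t = 0 := by
  induction l with
  | nil => rfl
  | cons x l ih =>
      rw [cnt_cons, if_neg (by rintro rfl; exact h List.mem_cons_self),
        ih (fun hm => h (List.mem_cons_of_mem _ hm)), add_zero]

theorem mem_of_cnt_ne_zero {l : List W} {t : W} (h : cnt l t ≠ 0) : t ∈ l := by
  by_contra hc; exact h (cnt_eq_zero_of_not_mem hc)

open scoped Classical in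
theorem cnt_map_conj (l : List W) (c t : W) :
    cnt (l.map (fun x => c⁻¹ * x * c)) t = cnt l (c * t * c⁻¹) := by
  induction l with
  | nil => rfl
  | cons x l ih =>
      rw [List.map_cons, cnt_cons, cnt_cons, ih]
      congr 1
      have : (c⁻¹ * x * c = t) ↔ (x = c * t * c⁻¹) := by
        constructor <;> intro h <;> [rw [← h]; rw [h]] <;> group
      simp only [this]

theorem zmod2_add_self (z : ZMod 2) : z + z = 0 := by
  have : (2 : ZMod 2) * z = 0 := by
    have : (2 : ZMod 2) = 0 := rfl
    rw [this, zero_mul]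
  rwa [two_mul] at this

variable (cs : CoxeterSystem M W)

open scoped Classical in
/-- The involution on `W × ZMod 2` attached to a simple reflection. -/
noncomputable def refQ (i : B) : Equiv.Perm (W × ZMod 2) :=
  Function.Involutive.toPerm
    (fun p => (cs.simple i * p.1 * cs.simple i,
      p.2 + if p.1 = cs.simple i then 1 else 0))
    (by
      rintro ⟨t, z⟩
      simp only [Prod.mk.injEq]
      constructor
      · rw [show cs.simple i * (cs.simple i * t * cs.simple i) * cs.simple i
            = (cs.simple i * cs.simple i) * t * (cs.simple i * cs.simple i) by group,
          cs.simple_mul_simple_self, one_mul, mul_one]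
      · have hiff : (cs.simple i * t * cs.simple i = cs.simple i) ↔ (t = cs.simple i) := by
          constructor
          · intro h
            have := congrArg (fun x => cs.simple i * x * cs.simple i) h
            simpa [show ∀ u : W, cs.simple i * (cs.simple i * u * cs.simple i) * cs.simple i
              = (cs.simple i * cs.simple i) * u * (cs.simple i * cs.simple i) from fun u => by group,
              cs.simple_mul_simple_self] using this
          · rintro rfl
            rw [cs.simple_mul_simple_self, one_mul]
        simp only [hiff]
        rw [add_assoc]
        split
        · rw [show (1 : ZMod 2) + 1 = 0 by decide, add_zero]
        · rw [add_zero, add_zero])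

open scoped Classical in
theorem refQ_apply (i : B) (t : W) (z : ZMod 2) :
    refQ cs i (t, z) = (cs.simple i * t * cs.simple i,
      z + if t = cs.simple i then 1 else 0) := rfl

open scoped Classical in
theorem prod_map_refQ (ω : List B) (t : W) (z : ZMod 2) :
    ((ω.map (refQ cs)).prod) (t, z)
      = (cs.wordProd ω * t * (cs.wordProd ω)⁻¹, z + cnt (cs.rightInvSeq ω) t) := by
  induction ω generalizing z with
  | nil => simp [cnt]
  | cons i ω ih =>
      rw [List.map_cons, List.prod_cons, Equiv.Perm.mul_apply, ih, refQ_apply,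
        cs.wordProd_cons]
      have hris : cs.rightInvSeq (i :: ω)
          = ((cs.wordProd ω)⁻¹ * cs.simple i * cs.wordProd ω) :: cs.rightInvSeq ω := rfl
      rw [hris, cnt_cons]
      simp only [Prod.mk.injEq]
      constructor
      · rw [mul_inv_rev, cs.inv_simple]; group
      · have hiff : (cs.wordProd ω * t * (cs.wordProd ω)⁻¹ = cs.simple i)
            ↔ ((cs.wordProd ω)⁻¹ * cs.simple i * cs.wordProd ω = t) := by
          constructor
          · intro h; rw [← h]; group
          · intro h; rw [← h]; group
        rw [if_congr hiff rfl rfl]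
        ring

theorem prod_map_refQ_pow (i i' : B) (m : ℕ) :
    ((alternatingWord i i' (2 * m)).map (refQ cs)).prod = (refQ cs i * refQ cs i') ^ m := by
  induction m with
  | zero => rfl
  | succ m ih =>
      have h2 : 2 * (m + 1) = (2 * m + 1) + 1 := by ring
      rw [h2, alternatingWord_succ', alternatingWord_succ']
      have he1 : ¬ Even (2 * m + 1) := by simp [Nat.even_add_one, parity_simps]
      have he2 : Even (2 * m) := even_two_mul m
      rw [if_neg he1, if_pos he2]
      rw [List.map_cons, List.map_cons, List.prod_cons, List.prod_cons, ih, pow_succ']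
      rw [← mul_assoc]

theorem alt_drop (i i' : B) : ∀ (n k : ℕ),
    (alternatingWord i i' n).drop k = alternatingWord i i' (n - k) := by
  intro n
  induction n with
  | zero => intro k; simp [show alternatingWord i i' 0 = ([] : List B) from rfl]
  | succ n ih =>
      intro k
      cases k with
      | zero => simp
      | succ k =>
          rw [alternatingWord_succ' i i' n, List.drop_succ_cons, ih k]
          congr 1
          omega

theorem alt_get? (i i' : B) : ∀ (n k : ℕ), k < n →
    (alternatingWord i i' n)[k]? = some (if Even (n - k - 1) then i' else i) := by
  intro n
  induction n with
  | zero => intro k h; omega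
  | succ n ih =>
      intro k hk
      cases k with
      | zero =>
          rw [alternatingWord_succ' i i' n]
          simp
      | succ k =>
          rw [alternatingWord_succ' i i' n, List.getElem?_cons_succ, ih k (by omega)]
          congr 3
          omega

/-- Auxiliary conjugated simple reflection. -/
noncomputable def tfun (i i' : B) (r : ℕ) : W :=
  (cs.wordProd (alternatingWord i i' r))⁻¹
    * (if Even r then cs.simple i' else cs.simple i)
    * cs.wordProd (alternatingWord i i' r)

theorem ris_alt_getD (i i' : B) (n k : ℕ) (h : k < n) :
    (cs.rightInvSeq (alternatingWord i i' n)).getD k 1 = tfun cs i i' (n - k - 1) := by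
  rw [cs.getD_rightInvSeq, alt_drop, alt_get? i i' n k h]
  have : n - (k + 1) = n - k - 1 := by omega
  rw [this]
  unfold tfun
  simp only [Option.map_some, Option.getD_some, apply_ite cs.simple]

theorem simple_conj_pow (i i' : B) (k : ℕ) :
    cs.simple i' * (cs.simple i * cs.simple i') ^ k * cs.simple i'
      = ((cs.simple i * cs.simple i') ^ k)⁻¹ := by
  have hb : cs.simple i' * cs.simple i' = 1 := cs.simple_mul_simple_self i'
  have h1 : cs.simple i' * (cs.simple i * cs.simple i') * cs.simple i'
      = (cs.simple i * cs.simple i')⁻¹ := by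
    rw [mul_inv_rev, cs.inv_simple, cs.inv_simple]
    calc cs.simple i' * (cs.simple i * cs.simple i') * cs.simple i'
        = cs.simple i' * cs.simple i * (cs.simple i' * cs.simple i') := by group
      _ = cs.simple i' * cs.simple i := by rw [hb, mul_one]
  induction k with
  | zero => simpa using hb
  | succ k ih =>
      have step : (cs.simple i' * (cs.simple i * cs.simple i') ^ k * cs.simple i')
            * (cs.simple i' * (cs.simple i * cs.simple i') * cs.simple i')
          = cs.simple i' * (cs.simple i * cs.simple i') ^ (k + 1) * cs.simple i' := by
        rw [show (cs.simple i' * (cs.simple i * cs.simple i') ^ k * cs.simple i')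
              * (cs.simple i' * (cs.simple i * cs.simple i') * cs.simple i')
            = cs.simple i' * (cs.simple i * cs.simple i') ^ k * (cs.simple i' * cs.simple i')
              * (cs.simple i * cs.simple i') * cs.simple i' from by group,
          hb, mul_one, pow_succ]
        group
      rw [← step, ih, h1, ← mul_inv_rev, ← pow_succ']

theorem key_form (i i' : B) (p q : ℕ) :
    ((cs.simple i * cs.simple i') ^ p)⁻¹ * cs.simple i' * (cs.simple i * cs.simple i') ^ q
      = ((cs.simple i * cs.simple i') ^ (p + q))⁻¹ * cs.simple i' := by
  have h := simple_conj_pow cs i i' q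
  have h2 : cs.simple i' * (cs.simple i * cs.simple i') ^ q
      = ((cs.simple i * cs.simple i') ^ q)⁻¹ * cs.simple i' := by
    have := congrArg (fun x => x * cs.simple i') h
    simpa [mul_assoc, cs.simple_mul_simple_self] using this
  rw [mul_assoc, h2, ← mul_assoc, ← mul_inv_rev, ← pow_add, Nat.add_comm q p]

theorem tfun_closed (i i' : B) (r : ℕ) :
    tfun cs i i' r = (((cs.simple i * cs.simple i') ^ ((r + 1) / 2))⁻¹) * cs.simple i'
      * (cs.simple i * cs.simple i') ^ (r / 2) := by
  unfold tfun
  rw [cs.prod_alternatingWord_eq_mul_pow]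
  rcases Nat.even_or_odd r with he | ho
  · rw [if_pos he, if_pos he, one_mul]
    obtain ⟨c, rfl⟩ := he
    have : (c + c + 1) / 2 = (c + c) / 2 := by omega
    rw [this]
  · have hne : ¬ Even r := Nat.not_even_iff_odd.mpr ho
    rw [if_neg hne, if_neg hne]
    obtain ⟨c, rfl⟩ := ho
    set P := (2 * c + 1) / 2 with hP
    have hodd : (2 * c + 1 + 1) / 2 = P + 1 := by omega
    have hba : cs.simple i' * cs.simple i * cs.simple i'
        = (cs.simple i * cs.simple i')⁻¹ * cs.simple i' := by
      rw [mul_inv_rev, cs.inv_simple, cs.inv_simple]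
    have e1 : (cs.simple i' * (cs.simple i * cs.simple i') ^ P)⁻¹ * cs.simple i
          * (cs.simple i' * (cs.simple i * cs.simple i') ^ P)
        = ((cs.simple i * cs.simple i') ^ P)⁻¹
          * (cs.simple i' * cs.simple i * cs.simple i')
          * (cs.simple i * cs.simple i') ^ P := by
      rw [mul_inv_rev, cs.inv_simple]
      group
    rw [e1, hba, hodd, pow_succ']
    conv_rhs => rw [mul_inv_rev]
    group

theorem tfun_period (i i' : B) (m r : ℕ) (hm : (cs.simple i * cs.simple i') ^ m = 1) :
    tfun cs i i' (r + m) = tfun cs i i' r := by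
  rw [tfun_closed, tfun_closed, key_form, key_form]
  have h1 : (r + m + 1) / 2 + (r + m) / 2 = r + m := by omega
  have h2 : (r + 1) / 2 + r / 2 = r := by omega
  rw [h1, h2, pow_add, hm, mul_one]

theorem cnt_ris_alt (i i' : B) (t : W) :
    cnt (cs.rightInvSeq (alternatingWord i i' (2 * M i i'))) t = 0 := by
  set m := M i i' with hmdef
  set L := cs.rightInvSeq (alternatingWord i i' (2 * m)) with hL
  have hlen : L.length = 2 * m := by
    rw [hL, cs.length_rightInvSeq, length_alternatingWord]
  have htake : L.take m = L.drop m := by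
    apply List.ext_getElem
    · simp [hlen]; omega
    · intro k h1 h2
      have hk : k < m := by
        simp only [List.length_take, hlen] at h1
        omega
      rw [List.getElem_take, List.getElem_drop]
      have e1 : L[k] = L.getD k 1 := (List.getD_eq_getElem L 1 (by omega : k < L.length)).symm
      have e2 : L[m + k] = L.getD (m + k) 1 :=
        (List.getD_eq_getElem L 1 (by omega : m + k < L.length)).symm
      rw [e1, e2, hL, ris_alt_getD cs i i' _ k (by omega), ris_alt_getD cs i i' _ (m + k) (by omega)]
      have h3 : 2 * m - k - 1 = (2 * m - (m + k) - 1) + m := by omega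
      rw [h3, tfun_period cs i i' m _ (cs.simple_mul_simple_pow i i')]
  have hsplit : L = L.take m ++ L.drop m := (List.take_append_drop m L).symm
  calc cnt L t = cnt (L.take m) t + cnt (L.drop m) t := by rw [← cnt_append, ← hsplit]
    _ = cnt (L.take m) t + cnt (L.take m) t := by rw [htake]
    _ = 0 := zmod2_add_self _

theorem refQ_liftable : M.IsLiftable (fun i => refQ cs i) := by
  intro i i'
  apply Equiv.ext
  rintro ⟨t, z⟩
  rw [← prod_map_refQ_pow, prod_map_refQ]
  have hpi : cs.wordProd (alternatingWord i i' (2 * M i i')) = 1 := by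
    rw [cs.prod_alternatingWord_eq_mul_pow, if_pos (even_two_mul _), one_mul]
    have : 2 * M i i' / 2 = M i i' := by omega
    rw [this, cs.simple_mul_simple_pow]
  rw [hpi, cnt_ris_alt]
  simp

/-- The reflection-parity permutation representation. -/
noncomputable def refPerm : W →* Equiv.Perm (W × ZMod 2) :=
  cs.lift ⟨fun i => refQ cs i, refQ_liftable cs⟩

theorem refPerm_wordProd (ω : List B) :
    refPerm cs (cs.wordProd ω) = (ω.map (refQ cs)).prod := by
  unfold CoxeterSystem.wordProd
  rw [MonoidHom.map_list_prod, List.map_map]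
  exact congrArg List.prod
    (List.map_congr_left (fun i _ => cs.lift_apply_simple (refQ_liftable cs) i))

theorem cnt_ris_invariance {ω ω' : List B} (h : cs.wordProd ω = cs.wordProd ω') (t : W) :
    cnt (cs.rightInvSeq ω) t = cnt (cs.rightInvSeq ω') t := by
  have h1 : refPerm cs (cs.wordProd ω) (t, 0) = refPerm cs (cs.wordProd ω') (t, 0) := by rw [h]
  rw [refPerm_wordProd, refPerm_wordProd, prod_map_refQ, prod_map_refQ] at h1
  have := congrArg Prod.snd h1
  simpa using this

theorem ris_append (l₁ l₂ : List B) :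
    cs.rightInvSeq (l₁ ++ l₂)
      = (cs.rightInvSeq l₁).map (fun x => (cs.wordProd l₂)⁻¹ * x * cs.wordProd l₂)
        ++ cs.rightInvSeq l₂ := by
  induction l₁ with
  | nil => simp
  | cons i l₁ ih =>
      have h1 : cs.rightInvSeq ((i :: l₁) ++ l₂)
          = ((cs.wordProd (l₁ ++ l₂))⁻¹ * cs.simple i * cs.wordProd (l₁ ++ l₂))
            :: cs.rightInvSeq (l₁ ++ l₂) := rfl
      have h2 : cs.rightInvSeq (i :: l₁)
          = ((cs.wordProd l₁)⁻¹ * cs.simple i * cs.wordProd l₁) :: cs.rightInvSeq l₁ := rfl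
      rw [h1, h2, ih, List.map_cons, List.cons_append]
      congr 1
      rw [cs.wordProd_append, mul_inv_rev]
      group

theorem lis_eq_map_ris (μ : List B) :
    cs.leftInvSeq μ
      = (cs.rightInvSeq μ).map (fun x => cs.wordProd μ * x * (cs.wordProd μ)⁻¹) := by
  induction μ with
  | nil => simp
  | cons i μ ih =>
      have h2 : cs.rightInvSeq (i :: μ)
          = ((cs.wordProd μ)⁻¹ * cs.simple i * cs.wordProd μ) :: cs.rightInvSeq μ := rfl
      have h3 : cs.leftInvSeq (i :: μ)
          = cs.simple i :: (cs.leftInvSeq μ).map (MulAut.conj (cs.simple i)) := rfl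
      rw [h2, h3, ih, List.map_cons, List.map_map, cs.wordProd_cons]
      congr 1
      · rw [mul_inv_rev, cs.inv_simple]
        group
        rw [show cs.simple i * cs.simple i * cs.simple i = cs.simple i from by
          rw [cs.simple_mul_simple_self, one_mul]]
      · apply List.map_congr_left
        intro x _
        simp only [Function.comp_apply, MulAut.conj_apply, mul_inv_rev, cs.inv_simple]
        group

theorem cnt_ris_reflection_word (μ : List B) (i : B) :
    cnt (cs.rightInvSeq (μ ++ ([i] ++ μ.reverse)))
      (cs.wordProd μ * cs.simple i * (cs.wordProd μ)⁻¹) = 1 := by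
  set w' := cs.wordProd μ with hw'
  set t := w' * cs.simple i * w'⁻¹ with ht
  rw [ris_append]
  have hmid : cs.rightInvSeq ([i] ++ μ.reverse)
      = ((cs.wordProd μ.reverse)⁻¹ * cs.simple i * cs.wordProd μ.reverse)
        :: cs.rightInvSeq μ.reverse := rfl
  have hrev : cs.wordProd μ.reverse = w'⁻¹ := by rw [cs.wordProd_reverse]
  rw [hmid, hrev, cnt_append, cnt_cons]
  have hmid2 : (w'⁻¹)⁻¹ * cs.simple i * w'⁻¹ = t := by rw [ht]; group
  rw [hmid2, if_pos rfl]
  -- first part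
  have hπ : cs.wordProd ([i] ++ μ.reverse) = cs.simple i * w'⁻¹ := by
    rw [cs.wordProd_append, hrev, cs.wordProd_singleton]
  rw [hπ]
  have h1 : cnt ((cs.rightInvSeq μ).map
        (fun x => (cs.simple i * w'⁻¹)⁻¹ * x * (cs.simple i * w'⁻¹))) t
      = cnt (cs.rightInvSeq μ) (cs.simple i) := by
    rw [show (fun x => (cs.simple i * w'⁻¹)⁻¹ * x * (cs.simple i * w'⁻¹))
        = (fun x => (cs.simple i * w'⁻¹)⁻¹ * x * (cs.simple i * w'⁻¹)) from rfl]
    rw [cnt_map_conj]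
    congr 1
    rw [ht, mul_inv_rev, inv_inv, cs.inv_simple]
    rw [show cs.simple i * w'⁻¹ * (w' * cs.simple i * w'⁻¹) * (w' * cs.simple i)
        = cs.simple i * (w'⁻¹ * w') * cs.simple i * (w'⁻¹ * w') * cs.simple i by group,
      inv_mul_cancel, mul_one, mul_one]
    rw [show cs.simple i * cs.simple i * cs.simple i
        = (cs.simple i * cs.simple i) * cs.simple i from by group,
      cs.simple_mul_simple_self, one_mul]
  rw [h1]
  have h2 : cnt (cs.rightInvSeq μ.reverse) t = cnt (cs.rightInvSeq μ) (cs.simple i) := by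
    rw [cs.rightInvSeq_reverse, cnt_reverse, lis_eq_map_ris]
    have : cnt ((cs.rightInvSeq μ).map (fun x => w' * x * w'⁻¹)) t
        = cnt ((cs.rightInvSeq μ).map (fun x => (w'⁻¹)⁻¹ * x * w'⁻¹)) t := by
      simp [inv_inv]
    rw [this, cnt_map_conj]
    congr 1
    rw [ht]
    group
  rw [h2]
  rw [show cnt (cs.rightInvSeq μ) (cs.simple i) + (1 + cnt (cs.rightInvSeq μ) (cs.simple i))
      = (cnt (cs.rightInvSeq μ) (cs.simple i) + cnt (cs.rightInvSeq μ) (cs.simple i)) + 1 by ring,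
    zmod2_add_self, zero_add]

/-- If `t` is a right inversion of `π ω` and `ω` is reduced then `t ∈ ris ω`. -/
theorem mem_rightInvSeq_of_isRightInversion {ω : List B} (hω : cs.IsReduced ω) {t : W}
    (ht : cs.IsReflection t) (hlt : cs.length (cs.wordProd ω * t) < cs.length (cs.wordProd ω)) :
    t ∈ cs.rightInvSeq ω := by
  apply mem_of_cnt_ne_zero
  have htt : t * t = 1 := ht.mul_self
  obtain ⟨ω', hω'red, hω'⟩ := cs.exists_reduced_word' (cs.wordProd ω * t)
  obtain ⟨w', i, htconj⟩ := id ht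
  set μω := ω' ++ (Classical.choose (cs.exists_reduced_word w')
    ++ ([i] ++ (Classical.choose (cs.exists_reduced_word w')).reverse)) with hμω
  have hμ := Classical.choose_spec (cs.exists_reduced_word w')
  set μ := Classical.choose (cs.exists_reduced_word w') with hμdef
  have hπμ : cs.wordProd μ = w' := hμ.2.symm
  have hτ : cs.wordProd (μ ++ ([i] ++ μ.reverse)) = t := by
    rw [cs.wordProd_append, cs.wordProd_append, cs.wordProd_reverse, cs.wordProd_singleton,
      hπμ, htconj, ← mul_assoc]
  have hπeq : cs.wordProd μω = cs.wordProd ω := by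
    rw [hμω, cs.wordProd_append, hτ, ← hω', mul_assoc]
    rw [htt, mul_one]
  have hcnt : cnt (cs.rightInvSeq ω) t = cnt (cs.rightInvSeq μω) t :=
    cnt_ris_invariance cs hπeq.symm t
  rw [hcnt, hμω, ris_append, cnt_append]
  have hc1 : cnt ((cs.rightInvSeq ω').map
      (fun x => (cs.wordProd (μ ++ ([i] ++ μ.reverse)))⁻¹ * x
        * cs.wordProd (μ ++ ([i] ++ μ.reverse)))) t = 0 := by
    rw [hτ, cnt_map_conj]
    have : t * t * t⁻¹ = t := by rw [htt, one_mul]; exact ht.inv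
    rw [this]
    apply cnt_eq_zero_of_not_mem
    intro hmem
    have := (cs.isRightInversion_of_mem_rightInvSeq hω'red hmem).2
    rw [← hω'] at this
    rw [mul_assoc, htt, mul_one] at this
    omega
  have hc2 : cnt (cs.rightInvSeq (μ ++ ([i] ++ μ.reverse))) t = 1 := by
    have := cnt_ris_reflection_word cs μ i
    rw [hπμ, ← htconj] at this
    exact this
  rw [hc1, hc2, zero_add]
  exact one_ne_zero

/-- Strong exchange property. -/
theorem strongExchange {ω : List B} (hω : cs.IsReduced ω) {t : W}
    (ht : cs.IsReflection t) (hlt : cs.length (cs.wordProd ω * t) < cs.length (cs.wordProd ω)) :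
    ∃ k < ω.length, cs.wordProd ω * t = cs.wordProd (ω.eraseIdx k) := by
  have hmem := mem_rightInvSeq_of_isRightInversion cs hω ht hlt
  obtain ⟨k, hk, hkt⟩ := List.getElem_of_mem hmem
  refine ⟨k, by simpa using hk, ?_⟩
  have : (cs.rightInvSeq ω).getD k 1 = t := by
    rw [List.getD_eq_getElem _ 1 hk, hkt]
  rw [← this]
  exact cs.wordProd_mul_getD_rightInvSeq ω k

theorem deletion_aux (n : ℕ) : ∀ ω : List B, ω.length ≤ n →
    ∃ v, List.Sublist v ω ∧ cs.IsReduced v ∧ cs.wordProd v = cs.wordProd ω := by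
  induction n using Nat.strong_induction_on with
  | _ n ih =>
    intro ω hlen
    by_cases hred : cs.IsReduced ω
    · exact ⟨ω, List.Sublist.refl ω, hred, rfl⟩
    · have hωne : ω ≠ [] := by
        rintro rfl
        exact hred (by simp [CoxeterSystem.IsReduced])
      have hexists : ∃ k, ¬ cs.IsReduced (ω.take (k + 1)) := by
        refine ⟨ω.length - 1, ?_⟩
        have : ω.length - 1 + 1 = ω.length := by
          have := List.length_pos_iff.mpr hωne
          omega
        rw [this, List.take_length]
        exact hred
      classical
      set k := Nat.find hexists with hkdef
      have hk : ¬ cs.IsReduced (ω.take (k + 1)) := Nat.find_spec hexists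
      have hmin : ∀ j, j < k → cs.IsReduced (ω.take (j + 1)) := by
        intro j hj
        by_contra hc
        exact Nat.find_min hexists hj hc
      have hklen : k < ω.length := by
        have : k ≤ ω.length - 1 := Nat.find_min' hexists (by
          have : ω.length - 1 + 1 = ω.length := by
            have := List.length_pos_iff.mpr hωne
            omega
          rw [this, List.take_length]
          exact hred)
        have := List.length_pos_iff.mpr hωne
        omega
      have htakered : cs.IsReduced (ω.take k) := by
        rcases Nat.eq_zero_or_pos k with hk0 | hkpos
        · rw [hk0]; simp [CoxeterSystem.IsReduced]
        · have hkk : k - 1 + 1 = k := by omega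
          rw [← hkk]
          exact hmin (k - 1) (by omega)
      have htake_len : (ω.take k).length = k := by
        rw [List.length_take]
        omega
      have hsplit : ω.take (k + 1) = ω.take k ++ [ω[k]] := by
        rw [List.take_succ]
        congr
        rw [List.getElem?_eq_getElem hklen]
        rfl
      have hπsplit : cs.wordProd (ω.take (k + 1)) = cs.wordProd (ω.take k) * cs.simple ω[k] := by
        rw [hsplit, cs.wordProd_append, cs.wordProd_singleton]
      have hlen_lt : cs.length (cs.wordProd (ω.take k) * cs.simple ω[k])
          < cs.length (cs.wordProd (ω.take k)) := by
        have h1 : cs.length (cs.wordProd (ω.take k)) = k := by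
          rw [htakered, htake_len]
        have h2 : cs.length (cs.wordProd (ω.take (k + 1))) ≠ k + 1 := by
          intro hc
          apply hk
          rw [CoxeterSystem.IsReduced, hc, List.length_take]
          omega
        have h3 := cs.length_mul_simple (cs.wordProd (ω.take k)) ω[k]
        rw [← hπsplit] at h3 ⊢
        rcases h3 with h3 | h3
        · exfalso; exact h2 (by rw [h3, h1])
        · omega
      obtain ⟨j, hj, hjeq⟩ := strongExchange cs htakered (cs.isReflection_simple ω[k]) hlen_lt
      rw [htake_len] at hj
      set v' := (ω.take k).eraseIdx j ++ ω.drop (k + 1) with hv'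
      have hπv' : cs.wordProd v' = cs.wordProd ω := by
        conv_rhs => rw [← List.take_append_drop (k + 1) ω]
        rw [hv', cs.wordProd_append, cs.wordProd_append, hπsplit, ← hjeq]
      have hsub : List.Sublist v' ω := by
        conv_rhs => rw [← List.take_append_drop k ω]
        apply List.Sublist.append
        · exact List.Sublist.trans (List.eraseIdx_sublist _ j) (List.Sublist.refl _)
        · have : ω.drop k = ω[k] :: ω.drop (k + 1) := List.drop_eq_getElem_cons hklen
          rw [this]
          exact List.sublist_cons_of_sublist _ (List.Sublist.refl _)
      have hlenv' : v'.length < n := by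
        have h1 : ((ω.take k).eraseIdx j).length = k - 1 := by
          rw [List.length_eraseIdx]
          simp [htake_len, hj]
        have h2 : (ω.drop (k + 1)).length = ω.length - (k + 1) := by simp
        have : v'.length = k - 1 + (ω.length - (k + 1)) := by
          rw [hv', List.length_append, h1, h2]
        omega
      obtain ⟨v, hvsub, hvred, hvπ⟩ := ih v'.length hlenv' v' (le_refl _)
      exact ⟨v, hvsub.trans hsub, hvred, by rw [hvπ, hπv']⟩

theorem deletion (ω : List B) :
    ∃ v, List.Sublist v ω ∧ cs.IsReduced v ∧ cs.wordProd v = cs.wordProd ω :=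
  deletion_aux cs ω.length ω (le_refl _)

theorem bruhat_refl (x : W) : BruhatLE cs x x := Relation.ReflTransGen.refl

theorem bruhat_trans {x y z : W} (h1 : BruhatLE cs x y) (h2 : BruhatLE cs y z) :
    BruhatLE cs x z := h1.trans h2

theorem bruhat_step {a t : W} (ht : cs.IsReflection t)
    (h : cs.length a < cs.length (a * t)) : BruhatLE cs a (a * t) :=
  Relation.ReflTransGen.single ⟨⟨t, ht, rfl⟩, h⟩

theorem bruhat_step_simple {a : W} {i : B}
    (h : cs.length a < cs.length (a * cs.simple i)) : BruhatLE cs a (a * cs.simple i) :=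
  bruhat_step cs (cs.isReflection_simple i) h

theorem bruhat_step_left {a : W} {i : B}
    (h : cs.length a < cs.length (cs.simple i * a)) : BruhatLE cs a (cs.simple i * a) := by
  have ht : cs.IsReflection (a⁻¹ * cs.simple i * a) := by
    have := (cs.isReflection_simple i).conj a⁻¹
    rwa [inv_inv] at this
  have := bruhat_step cs ht (by
    rw [show a * (a⁻¹ * cs.simple i * a) = cs.simple i * a by group]
    exact h)
  rwa [show a * (a⁻¹ * cs.simple i * a) = cs.simple i * a by group] at this

theorem bruhat_length_le {x y : W} (h : BruhatLE cs x y) : cs.length x ≤ cs.length y := by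
  induction h with
  | refl => exact le_refl _
  | tail _ h2 ih => exact le_trans ih (le_of_lt h2.2)

theorem bruhat_inv {x y : W} (h : BruhatLE cs x y) : BruhatLE cs x⁻¹ y⁻¹ := by
  induction h with
  | refl => exact bruhat_refl cs _
  | tail _ h2 ih =>
      obtain ⟨⟨t, ht, rfl⟩, hlen⟩ := h2
      rename_i b _
      have hxx : b⁻¹ * (b * t * b⁻¹) = (b * t)⁻¹ := by
        rw [mul_inv_rev, ht.inv]; group
      refine ih.trans ?_
      have hstep := bruhat_step cs (ht.conj b) (a := b⁻¹) ?_
      · rwa [hxx] at hstep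
      · rw [hxx, cs.length_inv, cs.length_inv]
        exact hlen

theorem master (n : ℕ) :
    (∀ u w : W, ∀ i : B, cs.length w ≤ n → BruhatLE cs u w →
      cs.length (w * cs.simple i) < cs.length w →
      cs.length u < cs.length (u * cs.simple i) → BruhatLE cs u (w * cs.simple i)) ∧
    (∀ u w : W, ∀ i : B, cs.length w ≤ n → BruhatLE cs u w →
      cs.length w < cs.length (w * cs.simple i) →
      cs.length u < cs.length (u * cs.simple i) →
      BruhatLE cs (u * cs.simple i) (w * cs.simple i)) ∧
    (∀ ω : List B, cs.IsReduced ω → ω.length ≤ n →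
      ∀ v, List.Sublist v ω → BruhatLE cs (cs.wordProd v) (cs.wordProd ω)) := by
  induction n using Nat.strong_induction_on with
  | _ n ih =>
  refine ⟨?_, ?_, ?_⟩
  · -- P1
    intro u w i hwn hle hdesc hasc
    rcases Relation.ReflTransGen.cases_tail hle with heq | ⟨z, hz, hstep⟩
    · exfalso; rw [heq] at hdesc; omega
    · obtain ⟨⟨t, hrt, hwzt⟩, hzw⟩ := hstep
      have hws : cs.length (w * cs.simple i) + 1 = cs.length w := by
        rcases cs.length_mul_simple w i with h | h
        · omega
        · exact h
      by_cases hzs : cs.length (z * cs.simple i) < cs.length z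
      · have h1 : BruhatLE cs u (z * cs.simple i) :=
          (ih (cs.length z) (by omega)).1 u z i (le_refl _) hz hzs hasc
        have h2 : BruhatLE cs (z * cs.simple i) (w * cs.simple i) := by
          have hr : cs.IsReflection (cs.simple i * t * cs.simple i) := by
            have := hrt.conj (cs.simple i)
            rwa [cs.inv_simple] at this
          have key : (z * cs.simple i) * (cs.simple i * t * cs.simple i)
              = w * cs.simple i := by
            rw [hwzt]
            rw [show z * cs.simple i * (cs.simple i * t * cs.simple i)
                = z * (cs.simple i * cs.simple i) * t * cs.simple i by group,
              cs.simple_mul_simple_self, mul_one]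
          have := bruhat_step cs hr (a := z * cs.simple i)
            (t := cs.simple i * t * cs.simple i) (by rw [key]; omega)
          rwa [key] at this
        exact h1.trans h2
      · have hzs' : cs.length z < cs.length (z * cs.simple i) := by
          have := cs.length_mul_simple_ne z i
          omega
        obtain ⟨ω₁, hω₁red, hω₁⟩ := cs.exists_reduced_word' (w * cs.simple i)
        have hlenω₁ : ω₁.length = cs.length (w * cs.simple i) := by
          rw [← hω₁red, ← hω₁]
        have hπω : cs.wordProd (ω₁ ++ [i]) = w := by
          rw [cs.wordProd_append, cs.wordProd_singleton, ← hω₁,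
            cs.simple_mul_simple_cancel_right]
        have hωred : cs.IsReduced (ω₁ ++ [i]) := by
          rw [CoxeterSystem.IsReduced, hπω, List.length_append, List.length_singleton,
            hlenω₁]
          omega
        have hwt : cs.length (cs.wordProd (ω₁ ++ [i]) * t) < cs.length (cs.wordProd (ω₁ ++ [i])) := by
          rw [hπω, hwzt, mul_assoc, hrt.mul_self, mul_one]
          rw [← hwzt]
          omega
        obtain ⟨k, hk, hkeq⟩ := strongExchange cs hωred hrt hwt
        have hzface : z = cs.wordProd ((ω₁ ++ [i]).eraseIdx k) := by
          rw [← hkeq, hπω, hwzt, mul_assoc, hrt.mul_self, mul_one]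
        rw [List.length_append, List.length_singleton] at hk
        by_cases hkl : k < ω₁.length
        · have herase : (ω₁ ++ [i]).eraseIdx k = ω₁.eraseIdx k ++ [i] :=
            List.eraseIdx_append_of_lt_length hkl [i]
          have hzsi : z * cs.simple i = cs.wordProd (ω₁.eraseIdx k) := by
            rw [hzface, herase, cs.wordProd_append, cs.wordProd_singleton,
              cs.simple_mul_simple_cancel_right]
          have h3 : BruhatLE cs (cs.wordProd (ω₁.eraseIdx k)) (cs.wordProd ω₁) := by
            refine (ih ω₁.length ?_).2.2 ω₁ hω₁red (le_refl _) _ (List.eraseIdx_sublist ω₁ k)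
            omega
          rw [← hzsi, ← hω₁] at h3
          exact (hz.trans (bruhat_step_simple cs hzs')).trans h3
        · have hkeq' : k = ω₁.length := by omega
          have herase : (ω₁ ++ [i]).eraseIdx k = ω₁ := by
            rw [hkeq', List.eraseIdx_append_of_length_le (le_refl _)]
            simp
          rw [hzface, herase, ← hω₁] at hz
          exact hz
  · -- P2
    intro u w i hwn hle hasc huasc
    rcases Relation.ReflTransGen.cases_tail hle with heq | ⟨z, hz, hstep⟩
    · rw [heq]; exact bruhat_refl cs _
    · obtain ⟨⟨t, hrt, hwzt⟩, hzw⟩ := hstep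
      by_cases hzs : cs.length (z * cs.simple i) < cs.length z
      · have h1 : BruhatLE cs u (z * cs.simple i) :=
          (ih (cs.length z) (by omega)).1 u z i (le_refl _) hz hzs huasc
        have h2 : BruhatLE cs (u * cs.simple i) ((z * cs.simple i) * cs.simple i) := by
          refine (ih (cs.length (z * cs.simple i)) (by omega)).2.1 u (z * cs.simple i) i
            (le_refl _) h1 ?_ huasc
          rw [cs.simple_mul_simple_cancel_right]
          exact hzs
        rw [cs.simple_mul_simple_cancel_right] at h2
        have h3 : BruhatLE cs z w := by
          rw [hwzt]; exact bruhat_step cs hrt (by rw [← hwzt]; exact hzw)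
        have h4 : BruhatLE cs w (w * cs.simple i) := bruhat_step_simple cs hasc
        exact h2.trans (h3.trans h4)
      · have hzs' : cs.length z < cs.length (z * cs.simple i) := by
          have := cs.length_mul_simple_ne z i
          omega
        have h1 : BruhatLE cs (u * cs.simple i) (z * cs.simple i) :=
          (ih (cs.length z) (by omega)).2.1 u z i (le_refl _) hz hzs' huasc
        have h2 : BruhatLE cs (z * cs.simple i) (w * cs.simple i) := by
          have hr : cs.IsReflection (cs.simple i * t * cs.simple i) := by
            have := hrt.conj (cs.simple i)
            rwa [cs.inv_simple] at this
          have key : (z * cs.simple i) * (cs.simple i * t * cs.simple i)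
              = w * cs.simple i := by
            rw [hwzt]
            rw [show z * cs.simple i * (cs.simple i * t * cs.simple i)
                = z * (cs.simple i * cs.simple i) * t * cs.simple i by group,
              cs.simple_mul_simple_self, mul_one]
          have hlen2 : cs.length (z * cs.simple i) < cs.length (w * cs.simple i) := by
            have h5 : cs.length (z * cs.simple i) = cs.length z + 1 := by
              have := cs.length_mul_simple z i
              omega
            have h6 : cs.length (w * cs.simple i) = cs.length w + 1 := by
              have := cs.length_mul_simple w i
              omega
            omega
          have := bruhat_step cs hr (a := z * cs.simple i)
            (t := cs.simple i * t * cs.simple i) (by rw [key]; exact hlen2)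
          rwa [key] at this
        exact h1.trans h2
  · -- P3
    intro ω hred hlen v hv
    rcases List.eq_nil_or_concat' ω with rfl | ⟨ω₀, a, rfl⟩
    · rw [List.sublist_nil.mp hv]
      exact bruhat_refl cs _
    · obtain ⟨v₁, v₂, rfl, hv₁, hv₂⟩ := List.sublist_append_iff.mp hv
      have hπω : cs.wordProd (ω₀ ++ [a]) = cs.wordProd ω₀ * cs.simple a := by
        rw [cs.wordProd_append, cs.wordProd_singleton]
      have hlenω₀ : ω₀.length + 1 = (ω₀ ++ [a]).length := by simp
      have hω₀red : cs.IsReduced ω₀ := by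
        have h1 : cs.length (cs.wordProd (ω₀ ++ [a])) = ω₀.length + 1 := by
          rw [hred]; simp
        have h2 := cs.length_wordProd_le ω₀
        have h3 : cs.length (cs.wordProd ω₀ * cs.simple a) ≤ cs.length (cs.wordProd ω₀) + 1 := by
          have := cs.length_mul_simple (cs.wordProd ω₀) a
          omega
        rw [hπω] at h1
        rw [CoxeterSystem.IsReduced]
        omega
      have hasc : cs.length (cs.wordProd ω₀) < cs.length (cs.wordProd ω₀ * cs.simple a) := by
        have h1 : cs.length (cs.wordProd (ω₀ ++ [a])) = ω₀.length + 1 := by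
          rw [hred]; simp
        rw [hπω] at h1
        rw [h1, hω₀red]
        omega
      rcases List.sublist_singleton.mp hv₂ with rfl | rfl
      · rw [List.append_nil] at *
        have h1 : BruhatLE cs (cs.wordProd v₁) (cs.wordProd ω₀) :=
          (ih ω₀.length (by omega)).2.2 ω₀ hω₀red (le_refl _) v₁ hv₁
        refine h1.trans ?_
        rw [hπω]
        exact bruhat_step_simple cs hasc
      · have h1 : BruhatLE cs (cs.wordProd v₁) (cs.wordProd ω₀) :=
          (ih ω₀.length (by omega)).2.2 ω₀ hω₀red (le_refl _) v₁ hv₁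
        have hπv : cs.wordProd (v₁ ++ [a]) = cs.wordProd v₁ * cs.simple a := by
          rw [cs.wordProd_append, cs.wordProd_singleton]
        rw [hπv, hπω]
        by_cases hva : cs.length (cs.wordProd v₁ * cs.simple a) < cs.length (cs.wordProd v₁)
        · have h2 : BruhatLE cs (cs.wordProd v₁ * cs.simple a) (cs.wordProd v₁) := by
            have := bruhat_step_simple cs (a := cs.wordProd v₁ * cs.simple a) (i := a) (by
              rw [cs.simple_mul_simple_cancel_right]
              exact hva)
            rwa [cs.simple_mul_simple_cancel_right] at this
          exact (h2.trans h1).trans (bruhat_step_simple cs hasc)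
        · have hva' : cs.length (cs.wordProd v₁) < cs.length (cs.wordProd v₁ * cs.simple a) := by
            have := cs.length_mul_simple_ne (cs.wordProd v₁) a
            omega
          exact (ih ω₀.length (by omega)).2.1 (cs.wordProd v₁) (cs.wordProd ω₀) a
            (le_of_eq hω₀red) h1 hasc hva'

theorem lift_b {u w : W} {i : B} (hle : BruhatLE cs u w)
    (hdesc : cs.length (w * cs.simple i) < cs.length w)
    (hasc : cs.length u < cs.length (u * cs.simple i)) :
    BruhatLE cs u (w * cs.simple i) :=
  (master cs (cs.length w)).1 u w i (le_refl _) hle hdesc hasc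

theorem lift_c {u w : W} {i : B} (hle : BruhatLE cs u w)
    (hasc : cs.length w < cs.length (w * cs.simple i))
    (huasc : cs.length u < cs.length (u * cs.simple i)) :
    BruhatLE cs (u * cs.simple i) (w * cs.simple i) :=
  (master cs (cs.length w)).2.1 u w i (le_refl _) hle hasc huasc

theorem subword_le {ω : List B} (hred : cs.IsReduced ω) {v : List B}
    (hv : List.Sublist v ω) : BruhatLE cs (cs.wordProd v) (cs.wordProd ω) :=
  (master cs ω.length).2.2 ω hred (le_refl _) v hv

theorem lift_a {u w : W} {i : B} (hle : BruhatLE cs u w)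
    (hdesc : cs.length (w * cs.simple i) < cs.length w) :
    BruhatLE cs (u * cs.simple i) w := by
  by_cases hus : cs.length (u * cs.simple i) < cs.length u
  · have h1 : BruhatLE cs (u * cs.simple i) u := by
      have := bruhat_step_simple cs (a := u * cs.simple i) (i := i) (by
        rw [cs.simple_mul_simple_cancel_right]; exact hus)
      rwa [cs.simple_mul_simple_cancel_right] at this
    exact h1.trans hle
  · have hus' : cs.length u < cs.length (u * cs.simple i) := by
      have := cs.length_mul_simple_ne u i
      omega
    have h1 : BruhatLE cs u (w * cs.simple i) := lift_b cs hle hdesc hus'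
    have h2 := lift_c cs h1 (by
      rw [cs.simple_mul_simple_cancel_right]; exact hdesc) hus'
    rwa [cs.simple_mul_simple_cancel_right] at h2

theorem lift_b_left {u w : W} {i : B} (hle : BruhatLE cs u w)
    (hdesc : cs.length (cs.simple i * w) < cs.length w)
    (hasc : cs.length u < cs.length (cs.simple i * u)) :
    BruhatLE cs u (cs.simple i * w) := by
  have h1 := lift_b cs (bruhat_inv cs hle) (i := i) ?_ ?_
  · have := bruhat_inv cs h1
    rwa [inv_inv, show (w⁻¹ * cs.simple i)⁻¹ = cs.simple i * w by
      rw [mul_inv_rev, inv_inv, cs.inv_simple]] at this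
  · rw [show w⁻¹ * cs.simple i = (cs.simple i * w)⁻¹ by
      rw [mul_inv_rev, cs.inv_simple], cs.length_inv, cs.length_inv]
    exact hdesc
  · rw [show u⁻¹ * cs.simple i = (cs.simple i * u)⁻¹ by
      rw [mul_inv_rev, cs.inv_simple], cs.length_inv, cs.length_inv]
    exact hasc

/-- Strong form of the subword property. -/
theorem exists_reduced_sublist {x y : W} (h : BruhatLE cs x y) :
    ∀ ω : List B, cs.IsReduced ω → cs.wordProd ω = y →
      ∃ v, List.Sublist v ω ∧ cs.IsReduced v ∧ cs.wordProd v = x := by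
  induction h with
  | refl => exact fun ω hred hπ => ⟨ω, List.Sublist.refl ω, hred, hπ⟩
  | @tail b c hab hbc ih =>
      intro ω hred hπ
      obtain ⟨⟨t, ht, hc⟩, hlen⟩ := hbc
      have hbt : b = cs.wordProd ω * t := by
        rw [hπ, hc, mul_assoc, ht.mul_self, mul_one]
      have hlt : cs.length (cs.wordProd ω * t) < cs.length (cs.wordProd ω) := by
        rw [← hbt, hπ]
        exact hlen
      obtain ⟨k, hk, hkeq⟩ := strongExchange cs hred ht hlt
      obtain ⟨v', hv'sub, hv'red, hv'π⟩ := deletion cs (ω.eraseIdx k)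
      obtain ⟨v, hvsub, hvred, hvπ⟩ := ih v' hv'red (by rw [hv'π, ← hkeq, ← hbt])
      exact ⟨v, hvsub.trans (hv'sub.trans (List.eraseIdx_sublist ω k)), hvred, hvπ⟩

theorem le_demStep (x : W) (i : B) : BruhatLE cs x (demStep cs x i) := by
  unfold demStep
  split
  · exact bruhat_step_simple cs (by assumption)
  · exact bruhat_refl cs x

theorem demWord_append (x : W) (l : List B) (i : B) :
    demWord cs x (l ++ [i]) = demStep cs (demWord cs x l) i := by
  unfold demWord
  rw [List.foldl_append]
  rfl

theorem le_demWord (x : W) (l : List B) : BruhatLE cs x (demWord cs x l) := by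
  induction l using List.reverseRecOn with
  | nil => exact bruhat_refl cs x
  | append_singleton l i ih =>
      rw [demWord_append]
      exact ih.trans (le_demStep cs _ i)

theorem demWord_dominates (l : List B) : ∀ v : List B, List.Sublist v l → ∀ u x : W,
    BruhatLE cs u x → BruhatLE cs (u * cs.wordProd v) (demWord cs x l) := by
  induction l using List.reverseRecOn with
  | nil =>
      intro v hv u x hle
      rw [List.sublist_nil.mp hv]
      simpa [demWord] using hle
  | append_singleton l i ih =>
      intro v hv u x hle
      rw [demWord_append]
      obtain ⟨v₁, v₂, rfl, hv₁, hv₂⟩ := List.sublist_append_iff.mp hv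
      rcases List.sublist_singleton.mp hv₂ with rfl | rfl
      · rw [List.append_nil]
        exact (ih v₁ hv₁ u x hle).trans (le_demStep cs _ i)
      · have h1 : BruhatLE cs (u * cs.wordProd v₁) (demWord cs x l) := ih v₁ hv₁ u x hle
        set D := demWord cs x l with hD
        have hπv : u * cs.wordProd (v₁ ++ [i]) = (u * cs.wordProd v₁) * cs.simple i := by
          rw [cs.wordProd_append, cs.wordProd_singleton, mul_assoc]
        rw [hπv]
        set u' := u * cs.wordProd v₁ with hu'
        unfold demStep
        split
        · rename_i hDi
          by_cases hua : cs.length (u' * cs.simple i) < cs.length u'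
          · have h2 : BruhatLE cs (u' * cs.simple i) u' := by
              have := bruhat_step_simple cs (a := u' * cs.simple i) (i := i) (by
                rw [cs.simple_mul_simple_cancel_right]; exact hua)
              rwa [cs.simple_mul_simple_cancel_right] at this
            exact (h2.trans h1).trans (bruhat_step_simple cs hDi)
          · have hua' : cs.length u' < cs.length (u' * cs.simple i) := by
              have := cs.length_mul_simple_ne u' i
              omega
            exact lift_c cs h1 hDi hua'
        · rename_i hDi
          have hDi' : cs.length (D * cs.simple i) < cs.length D := by
            have := cs.length_mul_simple_ne D i
            omega
          exact lift_a cs h1 hDi'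

theorem wordProd_mem_parabolic {J : Set B} {ω : List B} (h : ∀ b ∈ ω, b ∈ J) :
    cs.wordProd ω ∈ parabolic cs J := by
  induction ω with
  | nil => rw [cs.wordProd_nil]; exact one_mem _
  | cons c l ih =>
      rw [cs.wordProd_cons]
      exact mul_mem (Subgroup.subset_closure ⟨c, h c List.mem_cons_self, rfl⟩)
        (ih (fun b hb => h b (List.mem_cons_of_mem c hb)))

theorem parabolic_mem_iff {J : Set B} {x : W} :
    x ∈ parabolic cs J ↔ ∃ ω : List B, (∀ b ∈ ω, b ∈ J) ∧ x = cs.wordProd ω := by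
  constructor
  · intro hx
    induction hx using Subgroup.closure_induction with
    | mem y hy =>
        obtain ⟨b, hb, rfl⟩ := hy
        exact ⟨[b], by simpa using hb, (cs.wordProd_singleton b).symm⟩
    | one => exact ⟨[], by simp, (cs.wordProd_nil).symm⟩
    | mul y z _ _ ihy ihz =>
        obtain ⟨ω₁, h₁, rfl⟩ := ihy
        obtain ⟨ω₂, h₂, rfl⟩ := ihz
        exact ⟨ω₁ ++ ω₂, by
          intro b hb
          rcases List.mem_append.mp hb with hb | hb
          exacts [h₁ b hb, h₂ b hb], (cs.wordProd_append ω₁ ω₂).symm⟩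
    | inv y _ ihy =>
        obtain ⟨ω₁, h₁, rfl⟩ := ihy
        exact ⟨ω₁.reverse, fun b hb => h₁ b (List.mem_reverse.mp hb),
          (cs.wordProd_reverse ω₁).symm⟩
  · rintro ⟨ω, h, rfl⟩
    exact wordProd_mem_parabolic cs h

theorem simple_mem_parabolic {J : Set B} {a : B} (ha : a ∈ J) :
    cs.simple a ∈ parabolic cs J :=
  Subgroup.subset_closure ⟨a, ha, rfl⟩

theorem mem_doset_self (I J : Set B) (w : W) : w ∈ doset cs I J w :=
  ⟨1, one_mem _, 1, one_mem _, by simp⟩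

theorem doset_eq_of_mem {I J : Set B} {w z : W} (hz : z ∈ doset cs I J w) :
    doset cs I J z = doset cs I J w := by
  obtain ⟨a, ha, b, hb, rfl⟩ := hz
  ext x
  constructor
  · rintro ⟨a', ha', b', hb', rfl⟩
    exact ⟨a' * a, mul_mem ha' ha, b * b', mul_mem hb hb', by group⟩
  · rintro ⟨a', ha', b', hb', rfl⟩
    exact ⟨a' * a⁻¹, mul_mem ha' (inv_mem ha), b⁻¹ * b', mul_mem (inv_mem hb) hb', by group⟩

theorem doset_mul_left {I J : Set B} {w : W} {a : W} (ha : a ∈ parabolic cs I) {x : W}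
    (hx : x ∈ doset cs I J w) : a * x ∈ doset cs I J w := by
  obtain ⟨a', ha', b', hb', rfl⟩ := hx
  exact ⟨a * a', mul_mem ha ha', b', hb', by group⟩

theorem doset_mul_right {I J : Set B} {w : W} {b : W} (hb : b ∈ parabolic cs J) {x : W}
    (hx : x ∈ doset cs I J w) : x * b ∈ doset cs I J w := by
  obtain ⟨a', ha', b', hb', rfl⟩ := hx
  exact ⟨a', ha', b' * b, mul_mem hb' hb, by group⟩

/-- An element of a double coset with no descents on either side is Bruhat-minimal in it. -/
theorem doset_min {I J : Set B} {y : W}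
    (hl : ∀ a ∈ I, cs.length y < cs.length (cs.simple a * y))
    (hr : ∀ b ∈ J, cs.length y < cs.length (y * cs.simple b)) :
    ∀ x ∈ doset cs I J y, BruhatLE cs y x := by
  have h1 : ∀ ω : List B, (∀ j ∈ ω, j ∈ J) → BruhatLE cs y (y * cs.wordProd ω) := by
    intro ω
    induction ω using List.reverseRecOn with
    | nil => intro _; rw [cs.wordProd_nil, mul_one]; exact bruhat_refl cs y
    | append_singleton l c ihl =>
        intro hmem
        have h := ihl (fun j hj => hmem j (List.mem_append.mpr (Or.inl hj)))
        have hc : c ∈ J := hmem c (List.mem_append.mpr (Or.inr (List.mem_singleton_self c)))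
        rw [cs.wordProd_append, cs.wordProd_singleton, ← mul_assoc]
        set z := y * cs.wordProd l with hz
        by_cases hzc : cs.length z < cs.length (z * cs.simple c)
        · exact h.trans (bruhat_step_simple cs hzc)
        · have hzc' : cs.length (z * cs.simple c) < cs.length z := by
            have := cs.length_mul_simple_ne z c
            omega
          exact lift_b cs h hzc' (hr c hc)
  have h2 : ∀ ω : List B, (∀ j ∈ ω, j ∈ I) → ∀ zz : W, BruhatLE cs y zz →
      BruhatLE cs y (cs.wordProd ω * zz) := by
    intro ω
    induction ω with
    | nil => intro _ zz hzz; rw [cs.wordProd_nil, one_mul]; exact hzz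
    | cons c l ihl =>
        intro hmem zz hzz
        have h := ihl (fun j hj => hmem j (List.mem_cons_of_mem c hj)) zz hzz
        have hc : c ∈ I := hmem c List.mem_cons_self
        rw [cs.wordProd_cons, mul_assoc]
        set z := cs.wordProd l * zz with hz
        by_cases hzc : cs.length z < cs.length (cs.simple c * z)
        · exact h.trans (bruhat_step_left cs hzc)
        · have hzc' : cs.length (cs.simple c * z) < cs.length z := by
            have := cs.length_simple_mul_ne z c
            omega
          exact lift_b_left cs h hzc' (hl c hc)
  rintro x ⟨a, ha, b, hb, rfl⟩
  obtain ⟨ωb, hωbJ, rfl⟩ := (parabolic_mem_iff cs).mp hb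
  obtain ⟨ωa, hωaI, rfl⟩ := (parabolic_mem_iff cs).mp ha
  rw [mul_assoc]
  exact h2 ωa hωaI _ (h1 ωb hωbJ)

theorem exprMax_succ (wI : ℕ → W) (k : ℕ) :
    exprMax cs wI (k + 1) = dem cs (exprMax cs wI k) (wI (k + 1)) := by
  unfold exprMax
  rw [List.range_succ, List.map_append, List.foldl_append]
  rfl

theorem dem_eq_demWord (x y : W) :
    ∃ ω : List B, cs.IsReduced ω ∧ cs.wordProd ω = y ∧ dem cs x y = demWord cs x ω := by
  have spec := Classical.choose_spec (cs.exists_reduced_word y)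
  refine ⟨Classical.choose (cs.exists_reduced_word y), ?_, spec.2.symm, rfl⟩
  exact spec.1

/-- The terminus of any path subordinate to a singlestep expression for a coset
`p` is `≤ p` in the Bruhat order on double cosets. -/
theorem terminus_le (cs : CoxeterSystem M W) (I : ℕ → Set B) (d : ℕ)
    (hss : IsSinglestep I d) (hfin : ∀ i ≤ d, Finitary cs (I i))
    (wI : ℕ → W) (hwI : ∀ i ≤ d, IsMaxOf cs (parabolic cs (I i) : Set W) (wI i))
    (P : Set W) (hP : IsDCoset cs (I 0) (I d) P) (MP : W)
    (hMP : IsMaxOf cs P MP) (hexpr : MP = exprMax cs wI d)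
    (p : ℕ → Set W) (hp : IsSubPath cs I d p)
    (mt mP : W) (hmt : IsMinOf cs (p d) mt) (hmP : IsMinOf cs P mP) :
    BruhatLE cs mt mP := by
  have hexpr0 : exprMax cs wI 0 = wI 0 := by
    unfold exprMax
    simp
  -- path dominance
  have hdom : ∀ k, k ≤ d → ∀ x ∈ p k, BruhatLE cs x (exprMax cs wI k) := by
    intro k
    induction k with
    | zero =>
        intro _ x hx
        rw [hp.1] at hx
        obtain ⟨a, ha, b, hb, rfl⟩ := hx
        have hx' : a * 1 * b ∈ (parabolic cs (I 0) : Set W) := by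
          rw [mul_one]
          exact mul_mem ha hb
        rw [hexpr0]
        exact (hwI 0 (Nat.zero_le d)).2 _ hx'
    | succ k ihk =>
        intro hk1 x hx
        have hkd : k < d := by omega
        obtain ⟨ωd, hωdred, hωdπ, hdemeq⟩ := dem_eq_demWord cs (exprMax cs wI k) (wI (k + 1))
        rcases hss k hkd with ⟨s0, hs0, hins⟩ | ⟨s0, hs0, herase⟩
        · -- up step
          have hsub : I k ⊆ I (k + 1) := by rw [hins]; exact Set.subset_insert s0 (I k)
          have hpk : p k ⊆ p (k + 1) := (hp.2.2 k hkd).1 hsub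
          obtain ⟨w0, hw0⟩ := hp.2.1 k (by omega)
          have hw0mem : w0 ∈ p k := by rw [hw0]; exact mem_doset_self cs _ _ w0
          obtain ⟨w1, hw1⟩ := hp.2.1 (k + 1) hk1
          have hw0mem1' : w0 ∈ doset cs (I 0) (I (k + 1)) w1 := by
            rw [← hw1]
            exact hpk hw0mem
          have hpk1eq : p (k + 1) = doset cs (I 0) (I (k + 1)) w0 := by
            rw [hw1]
            exact (doset_eq_of_mem cs hw0mem1').symm
          rw [hpk1eq] at hx
          obtain ⟨a, ha, b, hb, rfl⟩ := hx
          have hpkeq : p k = doset cs (I 0) (I k) w0 := hw0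
          have haw0 : a * w0 ∈ p k := by
            rw [hpkeq]
            exact doset_mul_left cs ha (mem_doset_self cs _ _ w0)
          have hle1 : BruhatLE cs (a * w0) (exprMax cs wI k) := ihk (by omega) _ haw0
          have hble : BruhatLE cs b (wI (k + 1)) :=
            (hwI (k + 1) hk1).2 b (SetLike.mem_coe.mpr hb)
          obtain ⟨v, hvsub, hvred, hvπ⟩ := exists_reduced_sublist cs hble ωd hωdred hωdπ
          rw [exprMax_succ, hdemeq]
          have hfin := demWord_dominates cs ωd v hvsub (a * w0) (exprMax cs wI k) hle1
          rw [hvπ] at hfin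
          exact hfin
        · -- down step
          have hsub : I (k + 1) ⊆ I k := by rw [herase]; exact Set.diff_subset
          have hpk : p (k + 1) ⊆ p k := (hp.2.2 k hkd).2 hsub
          have hle1 : BruhatLE cs x (exprMax cs wI k) := ihk (by omega) x (hpk hx)
          rw [exprMax_succ, hdemeq]
          exact hle1.trans (le_demWord cs _ ωd)
  -- mt has no descents
  obtain ⟨wpd, hwpd⟩ := hp.2.1 d (le_refl d)
  have hmtmem : mt ∈ doset cs (I 0) (I d) wpd := by rw [← hwpd]; exact hmt.1
  have hpdeq : p d = doset cs (I 0) (I d) mt := by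
    rw [hwpd]
    exact (doset_eq_of_mem cs hmtmem).symm
  have hmtl : ∀ a ∈ I 0, cs.length mt < cs.length (cs.simple a * mt) := by
    intro a ha
    have hmem : cs.simple a * mt ∈ p d := by
      rw [hpdeq]
      exact doset_mul_left cs (simple_mem_parabolic cs ha) (mem_doset_self cs _ _ mt)
    have h := bruhat_length_le cs (hmt.2 _ hmem)
    have := cs.length_simple_mul_ne mt a
    omega
  have hmtr : ∀ b ∈ I d, cs.length mt < cs.length (mt * cs.simple b) := by
    intro b hb
    have hmem : mt * cs.simple b ∈ p d := by
      rw [hpdeq]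
      exact doset_mul_right cs (simple_mem_parabolic cs hb) (mem_doset_self cs _ _ mt)
    have h := bruhat_length_le cs (hmt.2 _ hmem)
    have := cs.length_mul_simple_ne mt b
    omega
  obtain ⟨wP, hwP⟩ := hP
  have strip : ∀ n : ℕ, ∀ y : W, cs.length y ≤ n → y ∈ P → BruhatLE cs mt y →
      BruhatLE cs mt mP := by
    intro n
    induction n using Nat.strong_induction_on with
    | _ n ihn =>
      intro y hylen hyP hmty
      by_cases hld : ∃ a ∈ I 0, cs.length (cs.simple a * y) < cs.length y
      · obtain ⟨a, ha, hlen⟩ := hld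
        have hy' : cs.simple a * y ∈ P := by
          rw [hwP] at hyP ⊢
          exact doset_mul_left cs (simple_mem_parabolic cs ha) hyP
        exact ihn (cs.length (cs.simple a * y)) (by omega) _ (le_refl _) hy'
          (lift_b_left cs hmty hlen (hmtl a ha))
      · by_cases hrd : ∃ b ∈ I d, cs.length (y * cs.simple b) < cs.length y
        · obtain ⟨b, hb, hlen⟩ := hrd
          have hy' : y * cs.simple b ∈ P := by
            rw [hwP] at hyP ⊢
            exact doset_mul_right cs (simple_mem_parabolic cs hb) hyP
          exact ihn (cs.length (y * cs.simple b)) (by omega) _ (le_refl _) hy'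
            (lift_b cs hmty hlen (hmtr b hb))
        · push_neg at hld hrd
          have hyl : ∀ a ∈ I 0, cs.length y < cs.length (cs.simple a * y) := by
            intro a ha
            have h1 := hld a ha
            have := cs.length_simple_mul_ne y a
            omega
          have hyr : ∀ b ∈ I d, cs.length y < cs.length (y * cs.simple b) := by
            intro b hb
            have h1 := hrd b hb
            have := cs.length_mul_simple_ne y b
            omega
          have hPy : P = doset cs (I 0) (I d) y := by
            rw [hwP]
            exact (doset_eq_of_mem cs (by rw [← hwP]; exact hyP)).symm
          have hymP : BruhatLE cs y mP := by
            apply doset_min cs hyl hyr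
            rw [← hPy]
            exact hmP.1
          exact hmty.trans hymP
  have hmtMP : BruhatLE cs mt MP := by
    rw [hexpr]
    exact hdom d (le_refl d) mt hmt.1
  exact strip (cs.length MP) MP (le_refl _) hMP.1 hmtMP

end CoxeterPaper
end

section
/- Let (W,S) be a Coxeter system with w ∈ W and reduced expression (s_1,…,s_l) for w. Let I, J ⊂ S be finitary. Then the maximal element of the double coset W_I w W_J equals the Demazure product w_I * s_1 * ⋯ * s_l * w_J of the longest element of W_I, the letters of the reduced word, and the longest element of W_J. -/
namespace CoxeterPaper

open CoxeterSystem

variable {B : Type*} {W : Type*} [Group W] {M : CoxeterMatrix B}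

namespace Aux

open List

variable (cs : CoxeterSystem M W)

open scoped Classical

local prefix:100 "s" => cs.simple
local prefix:100 "π" => cs.wordProd
local prefix:100 "ℓ" => cs.length

lemma rightInvSeq_cons' (i : B) (ω : List B) :
    cs.rightInvSeq (i :: ω) = ((π ω)⁻¹ * s i * π ω) :: cs.rightInvSeq ω := rfl

lemma simple_conj_eq_iff (i : B) (t : W) : s i * t * s i = s i ↔ t = s i := by
  constructor
  · intro h
    have h1 : s i * t * s i = 1 * s i := by rwa [one_mul]
    have h2 : t = (s i)⁻¹ := eq_inv_of_mul_eq_one_right (mul_right_cancel h1)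
    rwa [cs.inv_simple] at h2
  · rintro rfl
    rw [cs.simple_mul_simple_self, one_mul]

lemma simple_conj_conj (i : B) (t : W) : s i * (s i * t * s i) * s i = t := by
  rw [mul_assoc (cs.simple i) t, cs.simple_mul_simple_cancel_left,
    cs.simple_mul_simple_cancel_right]

/-- The function underlying the permutation representation on reflections × signs. -/
noncomputable def nuFun (i : B) : W × ZMod 2 → W × ZMod 2 :=
  fun p => (s i * p.1 * s i, p.2 + if p.1 = s i then 1 else 0)

lemma nuFun_involutive (i : B) : Function.Involutive (nuFun cs i) := by
  rintro ⟨t, e⟩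
  show (s i * (s i * t * s i) * s i, _) = _
  have h1 : s i * (s i * t * s i) * s i = t := simple_conj_conj cs i t
  refine Prod.ext h1 ?_
  show e + (if t = s i then 1 else 0) + (if s i * t * s i = s i then 1 else 0) = e
  rw [if_congr (simple_conj_eq_iff cs i t) rfl rfl]
  by_cases ht : t = s i
  · rw [if_pos ht, add_assoc]
    norm_num
    decide
  · rw [if_neg ht, add_zero, add_zero]

/-- The permutation representation generator. -/
noncomputable def nu (i : B) : Equiv.Perm (W × ZMod 2) := (nuFun_involutive cs i).toPerm

lemma nu_apply (i : B) (t : W) (e : ZMod 2) :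
    nu cs i (t, e) = (s i * t * s i, e + if t = s i then 1 else 0) := rfl

lemma prod_nu_apply (ω : List B) (t : W) (e : ZMod 2) :
    (ω.map (nu cs)).prod (t, e)
      = (π ω * t * (π ω)⁻¹, e + ((cs.rightInvSeq ω).count t : ZMod 2)) := by
  induction ω with
  | nil => simp
  | cons i ω ih =>
    rw [map_cons, prod_cons, Equiv.Perm.mul_apply, ih, nu_apply, rightInvSeq_cons', count_cons]
    have hc : (π ω * t * (π ω)⁻¹ = s i) ↔ ((π ω)⁻¹ * s i * π ω = t) := by
      constructor
      · intro h; rw [← h]; group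
      · intro h; rw [← h]; group
    refine Prod.ext ?_ ?_
    · show s i * (π ω * t * (π ω)⁻¹) * s i = π (i :: ω) * t * (π (i :: ω))⁻¹
      rw [wordProd_cons, mul_inv_rev, cs.inv_simple]
      group
    · show e + _ + _ = e + _
      push_cast [apply_ite (fun n : ℕ => (n : ZMod 2))]
      rw [if_congr hc rfl rfl, add_assoc]
      simp [beq_iff_eq]

lemma alternatingWord_two_mul_succ (i j : B) (m : ℕ) :
    alternatingWord i j (2 * (m + 1)) = i :: j :: alternatingWord i j (2 * m) := by
  have h1 : 2 * (m + 1) = (2 * m + 1) + 1 := by ring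
  rw [h1, alternatingWord_succ' i j, if_neg (by simp [Nat.even_add_one, Nat.not_even_iff_odd]),
    alternatingWord_succ' i j, if_pos (even_two_mul m)]

lemma prod_map_nu_alt (i j : B) (m : ℕ) :
    ((alternatingWord i j (2 * m)).map (nu cs)).prod = (nu cs i * nu cs j) ^ m := by
  induction m with
  | zero => simp [alternatingWord]
  | succ m ih =>
    rw [alternatingWord_two_mul_succ, map_cons, map_cons, prod_cons, prod_cons, ih, pow_succ',
      mul_assoc]

lemma wordProd_alt_two_mul (i j : B) (m : ℕ) :
    π (alternatingWord i j (2 * m)) = (s i * s j) ^ m := by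
  induction m with
  | zero => simp [alternatingWord]
  | succ m ih =>
    rw [alternatingWord_two_mul_succ, wordProd_cons, wordProd_cons, ih, pow_succ', mul_assoc]

lemma alternatingWord_drop (i j : B) (n k : ℕ) :
    (alternatingWord i j n).drop k = alternatingWord i j (n - k) := by
  induction k generalizing n with
  | zero => simp
  | succ k ih =>
    cases n with
    | zero => simp [alternatingWord]
    | succ n => rw [alternatingWord_succ', drop_succ_cons, ih, Nat.succ_sub_succ]

lemma getD_rightInvSeq_eq (ω : List B) (k : ℕ) (h : k < ω.length) :
    (cs.rightInvSeq ω).getD k 1 = (π (ω.drop (k + 1)))⁻¹ * π (ω.drop k) := by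
  rw [cs.getD_rightInvSeq ω k]
  rw [List.drop_eq_getElem_cons h, wordProd_cons]
  rw [List.getElem?_eq_getElem h]
  simp [mul_assoc]

lemma sj_mul_pow (i j : B) (a : ℕ) :
    s j * (s i * s j) ^ a = ((s i * s j) ^ a)⁻¹ * s j := by
  have key : s j * (s i * s j) * (s j)⁻¹ = (s i * s j)⁻¹ := by
    rw [cs.inv_simple, mul_inv_rev, cs.inv_simple, cs.inv_simple, ← mul_assoc,
      mul_assoc (cs.simple j * cs.simple i), cs.simple_mul_simple_self, mul_one]
  have h2 : s j * (s i * s j) ^ a * (s j)⁻¹ = ((s i * s j) ^ a)⁻¹ := by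
    rw [← conj_pow, key, inv_pow]
  calc s j * (s i * s j) ^ a = s j * (s i * s j) ^ a * (s j)⁻¹ * s j := by
        rw [inv_mul_cancel_right]
    _ = ((s i * s j) ^ a)⁻¹ * s j := by rw [h2]

lemma alt_inv_mul_succ (i j : B) (e : ℕ) :
    (π (alternatingWord i j e))⁻¹ * π (alternatingWord i j (e + 1))
      = ((s i * s j) ^ e)⁻¹ * s j := by
  rw [cs.prod_alternatingWord_eq_mul_pow, cs.prod_alternatingWord_eq_mul_pow]
  rcases Nat.even_or_odd e with he | ho
  · obtain ⟨c, rfl⟩ := he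
    have h1 : ¬ Even (c + c + 1) := by simp [Nat.even_add_one, Nat.not_even_iff_odd]
    rw [if_pos (by exact ⟨c, rfl⟩), if_neg h1, one_mul]
    have h2 : (c + c + 1) / 2 = c := by omega
    have h3 : (c + c) / 2 = c := by omega
    rw [h2, h3, sj_mul_pow, pow_add, mul_inv_rev, mul_assoc]
  · obtain ⟨c, rfl⟩ := ho
    have h1 : ¬ Even (2 * c + 1) := by simp [Nat.even_add_one, Nat.not_even_iff_odd]
    have h1' : Even (2 * c + 1 + 1) := by refine ⟨c + 1, by ring⟩
    rw [if_neg h1, if_pos h1', one_mul]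
    have h2 : (2 * c + 1) / 2 = c := by omega
    have h3 : (2 * c + 1 + 1) / 2 = c + 1 := by omega
    rw [h2, h3, mul_inv_rev, cs.inv_simple, mul_assoc, sj_mul_pow,
      ← mul_assoc, ← mul_inv_rev, ← pow_add]
    have h4 : c + 1 + c = 2 * c + 1 := by omega
    rw [h4]

lemma take_eq_drop_ris_alt (i j : B) (m : ℕ) (hm : (s i * s j) ^ m = 1) :
    (cs.rightInvSeq (alternatingWord i j (2 * m))).take m
      = (cs.rightInvSeq (alternatingWord i j (2 * m))).drop m := by
  have hlen : (cs.rightInvSeq (alternatingWord i j (2 * m))).length = 2 * m := by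
    rw [cs.length_rightInvSeq, length_alternatingWord]
  apply List.ext_getElem
  · simp [hlen]; omega
  · intro k h1 h2
    rw [List.getElem_take, List.getElem_drop]
    have hk : k < m := by simp [hlen] at h1; omega
    have hb1 : k < (cs.rightInvSeq (alternatingWord i j (2 * m))).length := by omega
    have hb2 : m + k < (cs.rightInvSeq (alternatingWord i j (2 * m))).length := by omega
    rw [← getD_eq_getElem _ 1 hb1, ← getD_eq_getElem _ 1 hb2]
    rw [getD_rightInvSeq_eq cs _ k (by rw [length_alternatingWord]; omega),
      getD_rightInvSeq_eq cs _ (m + k) (by rw [length_alternatingWord]; omega)]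
    rw [alternatingWord_drop, alternatingWord_drop, alternatingWord_drop, alternatingWord_drop]
    have e3 : 2 * m - (k + 1) = (m - k - 1) + m := by omega
    have e4 : 2 * m - k = (m - k - 1) + m + 1 := by omega
    have e5 : 2 * m - (m + k + 1) = m - k - 1 := by omega
    have e6 : 2 * m - (m + k) = (m - k - 1) + 1 := by omega
    rw [e3, e4, e5, e6, alt_inv_mul_succ, alt_inv_mul_succ, pow_add, hm, mul_one]

lemma count_ris_alt (i j : B) (m : ℕ) (hm : (s i * s j) ^ m = 1) (t : W) :
    (((cs.rightInvSeq (alternatingWord i j (2 * m))).count t : ℕ) : ZMod 2) = 0 := by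
  set L := cs.rightInvSeq (alternatingWord i j (2 * m))
  have h1 : L = L.take m ++ L.drop m := (List.take_append_drop m L).symm
  rw [h1, count_append, ← take_eq_drop_ris_alt cs i j m hm]
  push_cast
  rw [← two_mul]
  have h2 : (2 : ZMod 2) = 0 := rfl
  rw [h2, zero_mul]

lemma nu_liftable : M.IsLiftable (nu cs) := by
  intro i j
  apply Equiv.ext
  rintro ⟨t, e⟩
  rw [← prod_map_nu_alt, prod_nu_apply, wordProd_alt_two_mul, cs.simple_mul_simple_pow,
    count_ris_alt cs i j _ (cs.simple_mul_simple_pow i j) t]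
  simp

/-- The permutation representation of the Coxeter group. -/
noncomputable def rho : W →* Equiv.Perm (W × ZMod 2) := cs.lift ⟨nu cs, nu_liftable cs⟩

lemma rho_simple (i : B) : rho cs (s i) = nu cs i := cs.lift_apply_simple (nu_liftable cs) i

lemma rho_eq_prod (ω : List B) : rho cs (π ω) = (ω.map (nu cs)).prod := by
  induction ω with
  | nil => simp [wordProd_nil]
  | cons i ω ih => rw [wordProd_cons, map_mul, rho_simple, map_cons, prod_cons, ih]

lemma rho_wordProd (ω : List B) (t : W) (e : ZMod 2) :
    rho cs (π ω) (t, e) = (π ω * t * (π ω)⁻¹, e + ((cs.rightInvSeq ω).count t : ZMod 2)) := by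
  rw [rho_eq_prod, prod_nu_apply]

lemma count_parity_eq {ω ω' : List B} (h : π ω = π ω') (t : W) :
    (((cs.rightInvSeq ω).count t : ℕ) : ZMod 2) = (((cs.rightInvSeq ω').count t : ℕ) : ZMod 2) := by
  have h1 := rho_wordProd cs ω t 0
  have h2 := rho_wordProd cs ω' t 0
  rw [h] at h1
  have h3 := h1.symm.trans h2
  have := congrArg Prod.snd h3
  simpa using this

lemma rho_reflection {t : W} (ht : cs.IsReflection t) (e : ZMod 2) :
    rho cs t (t, e) = (t, e + 1) := by
  obtain ⟨w, i, rfl⟩ := ht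
  rcases cs.exists_reduced_word w with ⟨ω, -, rfl⟩
  induction ω generalizing e with
  | nil =>
    simp only [wordProd_nil, one_mul, inv_one, mul_one]
    rw [show (cs.simple i : W) = π [i] by simp, rho_eq_prod]
    simp only [map_cons, map_nil, prod_cons, prod_nil, mul_one, wordProd_singleton]
    rw [nu_apply, if_pos rfl]
    exact Prod.ext (by rw [cs.simple_mul_simple_self, one_mul]) rfl
  | cons jj ω ih =>
    have hexp : π (jj :: ω) * s i * (π (jj :: ω))⁻¹
        = s jj * (π ω * s i * (π ω)⁻¹) * s jj := by
      rw [wordProd_cons, mul_inv_rev, cs.inv_simple]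
      group
    rw [hexp]
    set t' := π ω * s i * (π ω)⁻¹ with ht'
    have hmul : rho cs (s jj * t' * s jj) = rho cs (s jj) * rho cs t' * rho cs (s jj) := by
      rw [map_mul, map_mul]
    by_cases hts : t' = s jj
    · have hred : s jj * t' * s jj = s jj := by
        rw [hts, cs.simple_mul_simple_self, one_mul]
      rw [hred, rho_simple, nu_apply, if_pos rfl]
      exact Prod.ext (by rw [cs.simple_mul_simple_self, one_mul]) rfl
    · have hinner : nu cs jj (s jj * t' * s jj, e) = (t', e) := by
        rw [nu_apply, if_neg (fun h => hts ((simple_conj_eq_iff cs jj t').mp h)), add_zero,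
          simple_conj_conj]
      rw [hmul, Equiv.Perm.mul_apply, Equiv.Perm.mul_apply, rho_simple, hinner]
      have ih' : rho cs t' (t', e) = (t', e + 1) := by rw [ht']; exact ih e
      rw [ih', nu_apply, if_neg hts]
      exact Prod.ext rfl (by rw [add_zero])

/-- Strong exchange property (right multiplication). -/
theorem exchange_right {ω : List B} (hred : cs.IsReduced ω) {t : W} (ht : cs.IsReflection t)
    (hl : ℓ (π ω * t) < ℓ (π ω)) :
    ∃ δ, δ <+ ω ∧ δ.length + 1 = ω.length ∧ π ω * t = π δ := by
  have hmem : t ∈ cs.rightInvSeq ω := by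
    by_contra hnot
    rcases cs.exists_reduced_word' (π ω * t) with ⟨δ, hδred, hδ⟩
    have hπ : π ω = π δ * t := by
      rw [← hδ, mul_assoc, ht.mul_self, mul_one]
    have hδmem : t ∉ cs.rightInvSeq δ := by
      intro hmem'
      have h5 := (cs.isRightInversion_of_mem_rightInvSeq hδred hmem').2
      rw [← hδ, mul_assoc, ht.mul_self, mul_one] at h5
      omega
    have h1 := rho_wordProd cs ω t 0
    have h2 : rho cs (π ω) (t, 0) = (π δ * t * (π δ)⁻¹, 1) := by
      rw [hπ, map_mul, Equiv.Perm.mul_apply, rho_reflection cs ht 0, rho_wordProd,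
        List.count_eq_zero.mpr hδmem]
      norm_num
    have h3 := congrArg Prod.snd (h1.symm.trans h2)
    simp only [List.count_eq_zero.mpr hnot] at h3
    simp at h3
  obtain ⟨jj, hjlt, hj⟩ := List.getElem_of_mem hmem
  have hlen : jj < ω.length := by
    have := cs.length_rightInvSeq ω
    omega
  refine ⟨ω.eraseIdx jj, eraseIdx_sublist ω jj, length_eraseIdx_add_one hlen, ?_⟩
  have h6 := cs.wordProd_mul_getD_rightInvSeq ω jj
  rwa [getD_eq_getElem _ 1 hjlt, hj] at h6

/-- Strong exchange property (left multiplication). -/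
theorem exchange_left {ω : List B} (hred : cs.IsReduced ω) {t : W} (ht : cs.IsReflection t)
    (hl : ℓ (t * π ω) < ℓ (π ω)) :
    ∃ δ, δ <+ ω ∧ δ.length + 1 = ω.length ∧ t * π ω = π δ := by
  have hred' : cs.IsReduced ω.reverse := (cs.isReduced_reverse_iff ω).mpr hred
  have hinv : (π ω.reverse * t)⁻¹ = t * π ω := by
    rw [wordProd_reverse, mul_inv_rev, inv_inv, ht.inv]
  have hl' : ℓ (π ω.reverse * t) < ℓ (π ω.reverse) := by
    rw [← cs.length_inv, hinv, wordProd_reverse, ← cs.length_inv (π ω)⁻¹, inv_inv]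
    exact hl
  obtain ⟨δ', hsub, hlen, heq⟩ := exchange_right cs hred' ht hl'
  refine ⟨δ'.reverse, ?_, ?_, ?_⟩
  · have h1 := hsub.reverse
    rwa [reverse_reverse] at h1
  · rw [length_reverse]
    rwa [length_reverse] at hlen
  · rw [← hinv, heq, ← wordProd_reverse]

/-- Deletion: any word has a reduced sublist with the same product. -/
theorem exists_reduced_sublist (ω : List B) :
    ∃ δ, δ <+ ω ∧ cs.IsReduced δ ∧ π δ = π ω := by
  suffices H : ∀ n ω, List.length ω ≤ n → ∃ δ, δ <+ ω ∧ cs.IsReduced δ ∧ π δ = π ω from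
    H ω.length ω le_rfl
  intro n
  induction n with
  | zero =>
    intro ω hlen
    rw [Nat.le_zero, List.length_eq_zero_iff] at hlen
    subst hlen
    exact ⟨[], by simp, by simp [CoxeterSystem.IsReduced], rfl⟩
  | succ n ihn =>
    intro ω hlen
    by_cases hred : cs.IsReduced ω
    · exact ⟨ω, Sublist.refl ω, hred, rfl⟩
    have hω0 : ω ≠ [] := by
      rintro rfl
      exact hred (by simp [CoxeterSystem.IsReduced])
    have hlenpos : 0 < ω.length := List.length_pos_iff.mpr hω0
    have hP : ∃ k, ¬ cs.IsReduced (ω.take (k + 1)) := by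
      refine ⟨ω.length - 1, ?_⟩
      rw [show ω.length - 1 + 1 = ω.length by omega, List.take_length]
      exact hred
    let k := Nat.find hP
    have hk : ¬ cs.IsReduced (ω.take (k + 1)) := Nat.find_spec hP
    have hkred : cs.IsReduced (ω.take k) := by
      rcases Nat.eq_zero_or_pos k with h0 | h0
      · rw [h0]; simp [CoxeterSystem.IsReduced]
      · have := Nat.find_min hP (show k - 1 < k by omega)
        rw [show k - 1 + 1 = k by omega] at this
        exact not_not.mp this
    have hklt : k < ω.length := by
      by_contra hge
      push_neg at hge
      rw [List.take_of_length_le hge] at hkred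
      exact hred hkred
    have hsplit : ω.take (k + 1) = ω.take k ++ [ω[k]] := by
      rw [List.take_succ, List.getElem?_eq_getElem hklt]
      rfl
    have hlen_take : ℓ (π (ω.take k)) = k := by
      have h1 : (ω.take k).length = k := by
        rw [List.length_take]; omega
      rw [hkred, h1]
    have hdesc : ℓ (π (ω.take k) * s (ω[k])) < ℓ (π (ω.take k)) := by
      rcases cs.length_mul_simple (π (ω.take k)) ω[k] with h | h
      · exfalso
        apply hk
        unfold CoxeterSystem.IsReduced
        rw [hsplit, wordProd_append, wordProd_singleton, h, hlen_take, List.length_append,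
          List.length_take, List.length_singleton]
        omega
      · omega
    obtain ⟨δ₀, hδ₀sub, hδ₀len, hδ₀eq⟩ :=
      exchange_right cs hkred (cs.isReflection_simple (ω[k])) hdesc
    have hπ : π (δ₀ ++ ω.drop (k + 1)) = π ω := by
      conv_rhs => rw [← List.take_append_drop (k + 1) ω]
      rw [wordProd_append, wordProd_append, ← hδ₀eq, hsplit, wordProd_append, wordProd_singleton]
    have hsub : δ₀ ++ ω.drop (k + 1) <+ ω := by
      conv_rhs => rw [← List.take_append_drop (k + 1) ω]
      refine Sublist.append ?_ (Sublist.refl _)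
      refine Sublist.trans hδ₀sub ?_
      rw [hsplit]
      exact List.sublist_append_left _ _
    have hlt : (δ₀ ++ ω.drop (k + 1)).length ≤ n := by
      have h1 : (ω.take k).length = k := by rw [List.length_take]; omega
      rw [List.length_append, List.length_drop]
      omega
    obtain ⟨δ, h1, h2, h3⟩ := ihn (δ₀ ++ ω.drop (k + 1)) hlt
    exact ⟨δ, h1.trans hsub, h2, h3.trans hπ⟩


/-! ### Bruhat order basics -/

lemma bruhat_refl (x : W) : BruhatLE cs x x := Relation.ReflTransGen.refl

lemma bruhat_trans {x y z : W} (h1 : BruhatLE cs x y) (h2 : BruhatLE cs y z) :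
    BruhatLE cs x z := Relation.ReflTransGen.trans h1 h2

lemma bruhat_length_le {x y : W} (h : BruhatLE cs x y) : ℓ x ≤ ℓ y := by
  induction h with
  | refl => exact le_rfl
  | tail _ h2 ih => exact le_trans ih (le_of_lt h2.2)

lemma bruhat_single {x t : W} (ht : cs.IsReflection t) (h : ℓ x < ℓ (x * t)) :
    BruhatLE cs x (x * t) :=
  Relation.ReflTransGen.single ⟨⟨t, ht, rfl⟩, h⟩

lemma bruhat_single' {x t : W} (ht : cs.IsReflection t) (h : ℓ (x * t) < ℓ x) :
    BruhatLE cs (x * t) x := by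
  have hx : x = (x * t) * t := by rw [mul_assoc, ht.mul_self, mul_one]
  exact Relation.ReflTransGen.single ⟨⟨t, ht, hx⟩, h⟩

/-- The subword property: anything Bruhat-below `π ω` is the product of a reduced
sublist of the reduced word `ω`. -/
theorem bruhat_subword {ω : List B} (hred : cs.IsReduced ω) {u : W} (h : BruhatLE cs u (π ω)) :
    ∃ τ, τ <+ ω ∧ cs.IsReduced τ ∧ π τ = u := by
  induction h using Relation.ReflTransGen.head_induction_on with
  | refl => exact ⟨ω, Sublist.refl ω, hred, rfl⟩
  | @head a c hstep hrest ih =>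
    obtain ⟨⟨t, ht, hc⟩, hlen⟩ := hstep
    obtain ⟨τ', hsub', hred', heq'⟩ := ih
    have ha : π τ' * t = a := by
      rw [heq', hc, mul_assoc, ht.mul_self, mul_one]
    have hlt : ℓ (π τ' * t) < ℓ (π τ') := by
      rw [ha, heq']
      rw [hc] at hlen ⊢
      exact hlen
    obtain ⟨δ, hδsub, -, hδeq⟩ := exchange_right cs hred' ht hlt
    obtain ⟨δ', h1, h2, h3⟩ := exists_reduced_sublist cs δ
    exact ⟨δ', h1.trans (hδsub.trans hsub'), h2, by rw [h3, ← hδeq, ha]⟩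

/-! ### Demazure step basics -/

lemma demStep_eq_of_lt {x : W} {i : B} (h : ℓ x < ℓ (x * s i)) :
    demStep cs x i = x * s i := by simp [demStep, h]

lemma demStep_eq_of_not_lt {x : W} {i : B} (h : ¬ ℓ x < ℓ (x * s i)) :
    demStep cs x i = x := by simp [demStep, h]

lemma le_demStep (x : W) (i : B) : BruhatLE cs x (demStep cs x i) := by
  by_cases h : ℓ x < ℓ (x * s i)
  · rw [demStep_eq_of_lt cs h]
    exact bruhat_single cs (cs.isReflection_simple i) h
  · rw [demStep_eq_of_not_lt cs h]
    exact bruhat_refl cs x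

lemma mul_simple_le_demStep (x : W) (i : B) : BruhatLE cs (x * s i) (demStep cs x i) := by
  by_cases h : ℓ x < ℓ (x * s i)
  · rw [demStep_eq_of_lt cs h]
    exact bruhat_refl cs _
  · rw [demStep_eq_of_not_lt cs h]
    push_neg at h
    exact bruhat_single' cs (cs.isReflection_simple i)
      (lt_of_le_of_ne h (cs.length_mul_simple_ne x i))

/-! ### Joint induction: subword property (easy direction) and lifting property -/

theorem CB : ∀ N : ℕ,
    (∀ ω, cs.IsReduced ω → ω.length ≤ N → ∀ τ, τ <+ ω → BruhatLE cs (π τ) (π ω)) ∧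
    (∀ w : W, ℓ w ≤ N → ∀ (i : B) (u : W), BruhatLE cs u w → ℓ (w * s i) < ℓ w →
      BruhatLE cs (u * s i) w) := by
  intro N
  induction N with
  | zero =>
    constructor
    · intro ω hred hlen τ hsub
      rw [Nat.le_zero, List.length_eq_zero_iff] at hlen
      subst hlen
      rw [List.sublist_nil.mp hsub]
      exact bruhat_refl cs _
    · intro w hw i u hu hlt
      omega
  | succ N ih =>
    obtain ⟨ihC, ihB⟩ := ih
    have stepLemma : ∀ w' : W, ℓ w' ≤ N → ∀ (i : B) (u : W), BruhatLE cs u w' →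
        BruhatLE cs (demStep cs u i) (demStep cs w' i) := by
      intro w' hw' i u hu
      induction hu using Relation.ReflTransGen.head_induction_on with
      | refl => exact bruhat_refl cs _
      | @head a c hstep hrest ih2 =>
        refine bruhat_trans cs ?_ ih2
        obtain ⟨⟨t, ht, hc⟩, hlen⟩ := hstep
        subst hc
        by_cases ha : ℓ a < ℓ (a * s i)
        · by_cases hc2 : ℓ (a * t) < ℓ (a * t * s i)
          · rw [demStep_eq_of_lt cs ha, demStep_eq_of_lt cs hc2]
            have hrefl : cs.IsReflection (s i * t * s i) := by
              have h1 := ht.conj (s i)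
              rwa [cs.inv_simple] at h1
            have key : a * t * s i = (a * s i) * (s i * t * s i) := by
              have k2 : a * t * s i = (a * s i) * ((s i)⁻¹ * t * s i) := by group
              rwa [cs.inv_simple] at k2
            have hlt2 : ℓ (a * s i) < ℓ ((a * s i) * (s i * t * s i)) := by
              rw [← key]
              rcases cs.length_mul_simple a i with h1 | h1
              · omega
              · omega
            have h2 := bruhat_single cs hrefl hlt2
            rwa [← key] at h2
          · rw [demStep_eq_of_lt cs ha, demStep_eq_of_not_lt cs hc2]
            push_neg at hc2
            have hdesc : ℓ ((a * t) * s i) < ℓ (a * t) :=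
              lt_of_le_of_ne hc2 (cs.length_mul_simple_ne (a * t) i)
            have hcw : ℓ (a * t) ≤ N := by
              have h3 := bruhat_length_le cs hrest
              omega
            exact ihB (a * t) hcw i a (bruhat_single cs ht hlen) hdesc
        · rw [demStep_eq_of_not_lt cs ha]
          exact bruhat_trans cs (bruhat_single cs ht hlen) (le_demStep cs (a * t) i)
    have CN1 : ∀ ω, cs.IsReduced ω → ω.length ≤ N + 1 → ∀ τ, τ <+ ω →
        BruhatLE cs (π τ) (π ω) := by
      intro ω hred hlen τ hsub
      rcases Nat.lt_or_ge ω.length (N + 1) with hlt | hge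
      · exact ihC ω hred (by omega) τ hsub
      have hlen' : ω.length = N + 1 := by omega
      obtain ⟨τ', hτ'sub, hτ'red, hτ'eq⟩ := exists_reduced_sublist cs τ
      rw [← hτ'eq]
      have hsub' : τ' <+ ω := hτ'sub.trans hsub
      rcases eq_or_ne τ'.length ω.length with heq | hne
      · rw [hsub'.eq_of_length heq]
        exact bruhat_refl cs _
      rcases List.eq_nil_or_concat ω with rfl | ⟨σ, i, hω⟩
      rotate_left
      rw [List.concat_eq_append] at hω
      subst hω
      rotate_right
      · rw [List.sublist_nil.mp hsub']
        exact bruhat_refl cs _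
      · have hσred : cs.IsReduced σ := by
          have h1 := hred.take σ.length
          rwa [List.take_left] at h1
        have hσlen : σ.length ≤ N := by
          rw [List.length_append, List.length_singleton] at hlen'
          omega
        have hred_len : ℓ (π σ * s i) = σ.length + 1 := by
          have h1 : ℓ (π (σ ++ [i])) = σ.length + 1 := by
            rw [hred, List.length_append, List.length_singleton]
          rwa [wordProd_append, wordProd_singleton] at h1
        obtain ⟨x, y, rfl, hx, hy⟩ := List.sublist_append_iff.mp hsub'
        rcases List.sublist_singleton.mp hy with rfl | rfl
        · rw [List.append_nil]
          refine bruhat_trans cs (ihC σ hσred hσlen x hx) ?_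
          rw [wordProd_append, wordProd_singleton]
          apply bruhat_single cs (cs.isReflection_simple i)
          have h2 : ℓ (π σ) = σ.length := hσred
          omega
        · have hxred : cs.IsReduced x := by
            have h1 := hτ'red.take x.length
            rwa [List.take_left] at h1
          have hu : BruhatLE cs (π x) (π σ) := ihC σ hσred hσlen x hx
          have hax : ℓ (π x) < ℓ (π x * s i) := by
            have h1 : ℓ (π (x ++ [i])) = x.length + 1 := by
              rw [hτ'red, List.length_append, List.length_singleton]
            rw [wordProd_append, wordProd_singleton] at h1
            have h2 : ℓ (π x) = x.length := hxred
            omega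
          have haσ : ℓ (π σ) < ℓ (π σ * s i) := by
            have h2 : ℓ (π σ) = σ.length := hσred
            omega
          have h3 := stepLemma (π σ) (by have h2 : ℓ (π σ) = σ.length := hσred; omega) i (π x) hu
          rw [demStep_eq_of_lt cs hax, demStep_eq_of_lt cs haσ] at h3
          rw [wordProd_append, wordProd_singleton, wordProd_append, wordProd_singleton]
          exact h3
    refine ⟨CN1, ?_⟩
    intro w hw i u hu hdesc
    by_cases hua : ℓ (u * s i) < ℓ u
    · exact bruhat_trans cs (bruhat_single' cs (cs.isReflection_simple i) hua) hu
    push_neg at hua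
    have hua' : ℓ u < ℓ (u * s i) := lt_of_le_of_ne hua (cs.length_mul_simple_ne u i).symm
    rcases cs.exists_reduced_word' (w * s i) with ⟨δ, hδred, hδeq⟩
    have hδlen : ℓ (π δ) = δ.length := hδred
    have hwlen : ℓ (w * s i) + 1 = ℓ w := by
      rcases cs.length_mul_simple w i with h2 | h2
      · omega
      · omega
    have hπω : π (δ ++ [i]) = w := by
      rw [wordProd_append, wordProd_singleton, ← hδeq, mul_assoc, cs.simple_mul_simple_self,
        mul_one]
    have hωred : cs.IsReduced (δ ++ [i]) := by
      unfold CoxeterSystem.IsReduced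
      rw [hπω, List.length_append, List.length_singleton]
      rw [← hδeq] at hδlen
      omega
    have hu2 : BruhatLE cs u (π (δ ++ [i])) := by rw [hπω]; exact hu
    obtain ⟨τ, hτsub, hτred, hτeq⟩ := bruhat_subword cs hωred hu2
    obtain ⟨x, y, rfl, hx, hy⟩ := List.sublist_append_iff.mp hτsub
    rcases List.sublist_singleton.mp hy with rfl | rfl
    · have hsub2 : x ++ [i] <+ δ ++ [i] := Sublist.append hx (Sublist.refl _)
      have hωlen : (δ ++ [i]).length ≤ N + 1 := by
        rw [List.length_append, List.length_singleton]
        rw [← hδeq] at hδlen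
        omega
      have h3 := CN1 (δ ++ [i]) hωred hωlen (x ++ [i]) hsub2
      rw [hπω, wordProd_append, wordProd_singleton] at h3
      rw [List.append_nil] at hτeq
      rw [← hτeq]
      exact h3
    · exfalso
      have hu_eq : u = π x * s i := by rw [← hτeq, wordProd_append, wordProd_singleton]
      have h4 : u * s i = π x := by
        rw [hu_eq, mul_assoc, cs.simple_mul_simple_self, mul_one]
      have h5 := cs.length_wordProd_le x
      have h6 : ℓ u = x.length + 1 := by
        rw [← hτeq, hτred, List.length_append, List.length_singleton]
      rw [h4] at hua'
      omega

/-- The subword property, easy direction. -/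
theorem sublist_bruhat_le {ω τ : List B} (hred : cs.IsReduced ω) (hsub : τ <+ ω) :
    BruhatLE cs (π τ) (π ω) :=
  (CB cs ω.length).1 ω hred le_rfl τ hsub

/-- Lifting property, descent form. -/
theorem descent_lift {w u : W} {i : B} (hu : BruhatLE cs u w) (hd : ℓ (w * s i) < ℓ w) :
    BruhatLE cs (u * s i) w :=
  (CB cs (ℓ w)).2 w le_rfl i u hu hd

/-- Lifting property, ascent form. -/
theorem ascent_lift {w u : W} {i : B} (hu : BruhatLE cs u w) (ha : ℓ w < ℓ (w * s i)) :
    BruhatLE cs (u * s i) (w * s i) := by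
  by_cases hua : ℓ (u * s i) < ℓ u
  · exact bruhat_trans cs (bruhat_single' cs (cs.isReflection_simple i) hua)
      (bruhat_trans cs hu (bruhat_single cs (cs.isReflection_simple i) ha))
  · rcases cs.exists_reduced_word' w with ⟨δ, hδred, rfl⟩
    obtain ⟨τ, hτsub, hτred, hτeq⟩ := bruhat_subword cs hδred hu
    have hωred : cs.IsReduced (δ ++ [i]) := by
      unfold CoxeterSystem.IsReduced
      rw [wordProd_append, wordProd_singleton, List.length_append, List.length_singleton]
      have h1 : ℓ (π δ) = δ.length := hδred
      rcases cs.length_mul_simple (π δ) i with h2 | h2 <;> omega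
    have h3 := sublist_bruhat_le cs hωred (Sublist.append hτsub (Sublist.refl [i]))
    rwa [wordProd_append, wordProd_singleton, wordProd_append, wordProd_singleton, hτeq] at h3

/-- Monotonicity of the Demazure step. -/
theorem demStep_mono {u w : W} (h : BruhatLE cs u w) (i : B) :
    BruhatLE cs (demStep cs u i) (demStep cs w i) := by
  by_cases hw : ℓ w < ℓ (w * s i)
  · rw [demStep_eq_of_lt cs hw]
    by_cases hu : ℓ u < ℓ (u * s i)
    · rw [demStep_eq_of_lt cs hu]
      exact ascent_lift cs h hw
    · rw [demStep_eq_of_not_lt cs hu]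
      exact bruhat_trans cs h (bruhat_single cs (cs.isReflection_simple i) hw)
  · rw [demStep_eq_of_not_lt cs hw]
    push_neg at hw
    by_cases hu : ℓ u < ℓ (u * s i)
    · rw [demStep_eq_of_lt cs hu]
      exact descent_lift cs h (lt_of_le_of_ne hw (cs.length_mul_simple_ne w i))
    · rw [demStep_eq_of_not_lt cs hu]
      exact h

/-! ### Demazure word lemmas -/

lemma demWord_nil (x : W) : demWord cs x [] = x := rfl

lemma demWord_concat (x : W) (ω : List B) (i : B) :
    demWord cs x (ω ++ [i]) = demStep cs (demWord cs x ω) i := by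
  unfold demWord
  rw [List.foldl_append]
  rfl

lemma le_demWord (x : W) (ω : List B) : BruhatLE cs x (demWord cs x ω) := by
  induction ω using List.reverseRecOn with
  | nil => exact bruhat_refl cs x
  | append_singleton ω i ih =>
    rw [demWord_concat]
    exact bruhat_trans cs ih (le_demStep cs _ i)

lemma demWord_mono {u x : W} (h : BruhatLE cs u x) (ω : List B) :
    BruhatLE cs (demWord cs u ω) (demWord cs x ω) := by
  induction ω using List.reverseRecOn with
  | nil => exact h
  | append_singleton ω i ih =>
    rw [demWord_concat, demWord_concat]
    exact demStep_mono cs ih i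

/-- Key estimate: if `u ≤ x` and `τ` is a sublist of `ω`, then `u * π τ ≤ x ⋆ ω`. -/
theorem sub_mul_le_demWord {ω τ : List B} (hsub : τ <+ ω) {u x : W} (hu : BruhatLE cs u x) :
    BruhatLE cs (u * π τ) (demWord cs x ω) := by
  induction ω using List.reverseRecOn generalizing τ with
  | nil =>
    rw [List.sublist_nil.mp hsub, wordProd_nil, mul_one]
    exact hu
  | append_singleton ω i ih =>
    rw [demWord_concat]
    obtain ⟨y, z, rfl, hy, hz⟩ := List.sublist_append_iff.mp hsub
    rcases List.sublist_singleton.mp hz with rfl | rfl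
    · rw [List.append_nil]
      exact bruhat_trans cs (ih hy) (le_demStep cs _ i)
    · rw [wordProd_append, wordProd_singleton, ← mul_assoc]
      exact bruhat_trans cs (mul_simple_le_demStep cs (u * π y) i) (demStep_mono cs (ih hy) i)

/-- The Demazure fold multiplies by the product of some sublist. -/
theorem demWord_eq_mul (x : W) (ω : List B) :
    ∃ τ, τ <+ ω ∧ demWord cs x ω = x * π τ := by
  induction ω using List.reverseRecOn with
  | nil => exact ⟨[], by simp, by rw [demWord_nil, wordProd_nil, mul_one]⟩
  | append_singleton ω i ih =>
    obtain ⟨τ, hsub, heq⟩ := ih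
    rw [demWord_concat]
    by_cases h : ℓ (demWord cs x ω) < ℓ (demWord cs x ω * s i)
    · refine ⟨τ ++ [i], Sublist.append hsub (Sublist.refl _), ?_⟩
      rw [demStep_eq_of_lt cs h, heq, wordProd_append, wordProd_singleton, mul_assoc]
    · exact ⟨τ, hsub.trans (List.sublist_append_left ω [i]),
        by rw [demStep_eq_of_not_lt cs h, heq]⟩

/-! ### Parabolic subgroups -/

lemma exists_word_of_mem_parabolic {I : Set B} {a : W} (ha : a ∈ parabolic cs I) :
    ∃ α : List B, (∀ b ∈ α, b ∈ I) ∧ a = π α := by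
  induction ha using Subgroup.closure_induction with
  | mem x hx =>
    obtain ⟨i, hi, rfl⟩ := hx
    exact ⟨[i], by simpa using hi, by simp⟩
  | one => exact ⟨[], by simp, by simp⟩
  | mul x y hx hy ihx ihy =>
    obtain ⟨α, hα1, rfl⟩ := ihx
    obtain ⟨β, hβ1, rfl⟩ := ihy
    exact ⟨α ++ β, by
      intro b hb
      rcases List.mem_append.mp hb with h | h
      exacts [hα1 b h, hβ1 b h], (wordProd_append cs α β).symm⟩
  | inv x hx ihx =>
    obtain ⟨α, hα1, rfl⟩ := ihx
    exact ⟨α.reverse, fun b hb => hα1 b (List.mem_reverse.mp hb),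
      (wordProd_reverse cs α).symm⟩

lemma wordProd_mem_parabolic {I : Set B} {α : List B} (hα : ∀ b ∈ α, b ∈ I) :
    π α ∈ parabolic cs I := by
  induction α with
  | nil => rw [wordProd_nil]; exact one_mem _
  | cons i α ih =>
    rw [wordProd_cons]
    exact mul_mem (Subgroup.subset_closure ⟨i, hα i (List.mem_cons_self), rfl⟩)
      (ih fun b hb => hα b (List.mem_cons_of_mem _ hb))

lemma simple_mem_parabolic {I : Set B} {i : B} (hi : i ∈ I) : s i ∈ parabolic cs I :=
  Subgroup.subset_closure ⟨i, hi, rfl⟩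

lemma exists_reduced_word_subset {I : Set B} {a : W} (ha : a ∈ parabolic cs I) :
    ∃ α : List B, (∀ b ∈ α, b ∈ I) ∧ cs.IsReduced α ∧ a = π α := by
  obtain ⟨α₀, hα₀, rfl⟩ := exists_word_of_mem_parabolic cs ha
  obtain ⟨α, hsub, hred, heq⟩ := exists_reduced_sublist cs α₀
  exact ⟨α, fun b hb => hα₀ b (hsub.subset hb), hred, heq.symm⟩

lemma wordProd_mem_of_simples {H : Subgroup W} {α : List B} (h : ∀ b ∈ α, s b ∈ H) :
    π α ∈ H := by
  induction α with
  | nil => rw [wordProd_nil]; exact one_mem _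
  | cons i α ih =>
    rw [wordProd_cons]
    exact mul_mem (h i (List.mem_cons_self)) (ih fun b hb => h b (List.mem_cons_of_mem _ hb))

/-- Letters of any reduced word of an element of a standard parabolic subgroup give
simple reflections lying in that parabolic. -/
theorem simples_of_reduced_word_mem {J : Set B} :
    ∀ n, ∀ w : W, ℓ w ≤ n → w ∈ parabolic cs J → ∀ γ, cs.IsReduced γ → w = π γ →
      ∀ j ∈ γ, s j ∈ parabolic cs J := by
  intro n
  induction n with
  | zero =>
    intro w hw hmem γ hred hwγ j hj
    have h1 : γ.length = 0 := by
      have h2 : ℓ (π γ) = γ.length := hred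
      rw [← hwγ] at h2
      omega
    rw [List.length_eq_zero_iff] at h1
    subst h1
    simp at hj
  | succ n ihn =>
    intro w hw hmem γ hred hwγ j0 hj0
    cases γ with
    | nil => simp at hj0
    | cons j γ' =>
      have hγ'red : cs.IsReduced γ' := by
        have h2 := hred.drop 1
        simpa using h2
      have hlw : ℓ w = γ'.length + 1 := by
        rw [hwγ, hred]
        simp
      have hlγ' : ℓ (π γ') = γ'.length := hγ'red
      have hschain : s j * w = π γ' := by
        rw [hwγ, wordProd_cons, cs.simple_mul_simple_cancel_left]
      obtain ⟨β, hβJ, hβred, hβeq⟩ := exists_reduced_word_subset cs hmem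
      have hl3 : ℓ (s j * π β) < ℓ (π β) := by
        rw [← hβeq, hschain]
        omega
      obtain ⟨δ, hδsub, -, hδeq⟩ := exchange_left cs hβred (cs.isReflection_simple j) hl3
      have hw2mem : s j * w ∈ parabolic cs J := by
        rw [hβeq, hδeq]
        exact wordProd_mem_parabolic cs (fun b hb => hβJ b (hδsub.subset hb))
      have hsj : s j ∈ parabolic cs J := by
        have h4 : (s j : W) = (s j * w) * w⁻¹ := by group
        rw [h4]
        exact mul_mem hw2mem (inv_mem hmem)
      rcases List.mem_cons.mp hj0 with rfl | hj0'
      · exact hsj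
      · refine ihn (s j * w) ?_ hw2mem γ' hγ'red hschain j0 hj0'
        rw [hschain]
        omega

/-! ### Minimal coset representatives -/

lemma exists_min_coset (I : Set B) (v : W) :
    ∃ u₀ : W, (∃ a ∈ parabolic cs I, u₀ = a * v) ∧
      ∀ x : W, (∃ a ∈ parabolic cs I, x = a * v) → ℓ u₀ ≤ ℓ x := by
  classical
  set S : Set ℕ := {n | ∃ x : W, (∃ a ∈ parabolic cs I, x = a * v) ∧ ℓ x = n} with hS
  have hSne : S.Nonempty := ⟨ℓ v, v, ⟨1, one_mem _, (one_mul v).symm⟩, rfl⟩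
  obtain ⟨x, hx, hlx⟩ := Nat.sInf_mem hSne
  refine ⟨x, hx, fun y hy => ?_⟩
  rw [hlx]
  exact Nat.sInf_le ⟨y, hy, rfl⟩

/-- Length additivity over the minimal coset representative. -/
theorem length_add_of_min {I : Set B} {u₀ : W}
    (hmin : ∀ a ∈ parabolic cs I, ℓ u₀ ≤ ℓ (a * u₀)) :
    ∀ n, ∀ b : W, b ∈ parabolic cs I → ℓ b ≤ n → ℓ (b * u₀) = ℓ b + ℓ u₀ := by
  intro n
  induction n with
  | zero =>
    intro b _ hbn
    have : b = 1 := cs.length_eq_zero_iff.mp (by omega)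
    subst this
    simp
  | succ n ihn =>
    intro b hb hbn
    obtain ⟨β, hβI, hβred, rfl⟩ := exists_reduced_word_subset cs hb
    cases β with
    | nil => simp [wordProd_nil]
    | cons i β' =>
      have hβ'red : cs.IsReduced β' := by
        have h2 := hβred.drop 1
        simpa using h2
      have hb' : π β' ∈ parabolic cs I :=
        wordProd_mem_parabolic cs (fun b hb => hβI b (List.mem_cons_of_mem _ hb))
      have hlb : ℓ (π (i :: β')) = β'.length + 1 := by rw [hβred]; simp
      have hlb' : ℓ (π β') = β'.length := hβ'red
      have ih2 := ihn (π β') hb' (by omega)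
      rw [wordProd_cons, mul_assoc]
      rcases cs.length_simple_mul (π β' * u₀) i with h1 | h1
      · rw [h1, ih2, ← wordProd_cons, hlb]
        omega
      · exfalso
        rcases cs.exists_reduced_word' u₀ with ⟨υ, hυred, hυeq⟩
        have h12 : ℓ u₀ = υ.length := by rw [hυeq]; exact hυred
        have hρred : cs.IsReduced (β' ++ υ) := by
          unfold CoxeterSystem.IsReduced
          rw [wordProd_append, ← hυeq, ih2, List.length_append]
          omega
        have hl4 : ℓ (s i * π (β' ++ υ)) < ℓ (π (β' ++ υ)) := by
          rw [wordProd_append, ← hυeq]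
          omega
        obtain ⟨δ, hδsub, hδlen, hδeq⟩ :=
          exchange_left cs hρred (cs.isReflection_simple i) hl4
        obtain ⟨d1, d2, rfl, hd1, hd2⟩ := List.sublist_append_iff.mp hδsub
        rw [List.length_append, List.length_append] at hδlen
        by_cases hful : d2.length = υ.length
        · have hd2eq : d2 = υ := hd2.eq_of_length hful
          have hcan : s i * π β' = π d1 := by
            have h13 := hδeq
            rw [wordProd_append, wordProd_append, hd2eq, ← mul_assoc] at h13
            exact mul_right_cancel h13
          have h5 := cs.length_wordProd_le d1
          have h6 : ℓ (s i * π β') = β'.length + 1 := by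
            rw [← wordProd_cons, hβred]
            simp
          have h16 : ℓ (s i * π β') = ℓ (π d1) := by rw [hcan]
          omega
        · have h8 : d1.length = β'.length := by
            have h14 := hd1.length_le
            have h15 := hd2.length_le
            omega
          have hd1eq : d1 = β' := hd1.eq_of_length h8
          have hcan : s i * (π β' * u₀) = π β' * π d2 := by
            have h13 := hδeq
            rw [wordProd_append, wordProd_append, hd1eq, ← hυeq] at h13
            rw [← mul_assoc]
            rw [← mul_assoc] at h13
            exact h13
          have ha : (π β')⁻¹ * (s i * π β') ∈ parabolic cs I :=
            mul_mem (inv_mem hb')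
              (mul_mem (simple_mem_parabolic cs (hβI i (List.mem_cons_self))) hb')
          have hu₂ : π d2 = ((π β')⁻¹ * (s i * π β')) * u₀ := by
            calc π d2 = (π β')⁻¹ * (π β' * π d2) := by group
              _ = (π β')⁻¹ * (s i * (π β' * u₀)) := by rw [hcan]
              _ = ((π β')⁻¹ * (s i * π β')) * u₀ := by group
          have h9 := hmin _ ha
          rw [← hu₂] at h9
          have h10 := cs.length_wordProd_le d2
          omega

/-! ### Membership of the Demazure fold in the coset -/

theorem demWord_mem_coset {I : Set B} {wI : W} (hwI : wI ∈ parabolic cs I)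
    {l : List B} (hlred : cs.IsReduced l) :
    ∀ k, k ≤ l.length → ∃ a ∈ parabolic cs I,
      demWord cs wI (l.take k) = a * π (l.take k) := by
  intro k
  induction k with
  | zero =>
    intro _
    exact ⟨wI, hwI, by simp [demWord_nil, wordProd_nil]⟩
  | succ k ihk =>
    intro hk1
    have hk : k < l.length := by omega
    obtain ⟨a, haI, hXa⟩ := ihk (by omega)
    have htake : l.take (k + 1) = l.take k ++ [l[k]] := by
      rw [List.take_succ, List.getElem?_eq_getElem hk]
      rfl
    have hvred : cs.IsReduced (l.take k) := hlred.take k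
    have htred : cs.IsReduced (l.take (k + 1)) := hlred.take (k + 1)
    set v := π (l.take k) with hv
    have hvlen : ℓ v = k := by
      have h : ℓ v = (l.take k).length := hvred
      rw [List.length_take] at h
      omega
    have hvslen : ℓ (v * s (l[k])) = k + 1 := by
      have h : ℓ (π (l.take (k + 1))) = (l.take (k + 1)).length := htred
      rw [htake, wordProd_append, wordProd_singleton, List.length_append, List.length_take,
        List.length_singleton, ← hv] at h
      omega
    have hstep : demWord cs wI (l.take (k + 1)) = demStep cs (demWord cs wI (l.take k)) (l[k]) := by
      rw [htake, demWord_concat]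
    set X := demWord cs wI (l.take k) with hX
    by_cases hasc : ℓ X < ℓ (X * s (l[k]))
    · refine ⟨a, haI, ?_⟩
      rw [hstep, demStep_eq_of_lt cs hasc, hXa, htake, wordProd_append, wordProd_singleton,
        mul_assoc]
    · push_neg at hasc
      have hdesc : ℓ (X * s (l[k])) < ℓ X :=
        lt_of_le_of_ne hasc (cs.length_mul_simple_ne X _)
      obtain ⟨u₀, ⟨a₀, ha₀I, hu₀⟩, hmin⟩ := exists_min_coset cs I v
      have hmin' : ∀ c ∈ parabolic cs I, ℓ u₀ ≤ ℓ (c * u₀) := by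
        intro c hc
        exact hmin _ ⟨c * a₀, mul_mem hc ha₀I, by rw [hu₀]; group⟩
      have hb : X = (a * a₀⁻¹) * u₀ := by rw [hXa, hu₀]; group
      have hbI : a * a₀⁻¹ ∈ parabolic cs I := mul_mem haI (inv_mem ha₀I)
      have hva : v = a₀⁻¹ * u₀ := by rw [hu₀]; group
      have ha₀inv : a₀⁻¹ ∈ parabolic cs I := inv_mem ha₀I
      have hlX : ℓ X = ℓ (a * a₀⁻¹) + ℓ u₀ := by
        rw [hb]
        exact length_add_of_min cs hmin' (ℓ (a * a₀⁻¹)) _ hbI le_rfl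
      have hlv : ℓ v = ℓ (a₀⁻¹) + ℓ u₀ := by
        rw [hva]
        exact length_add_of_min cs hmin' (ℓ (a₀⁻¹)) _ ha₀inv le_rfl
      obtain ⟨βb, hβbI, hβbred, hβbeq⟩ := exists_reduced_word_subset cs hbI
      rcases cs.exists_reduced_word' u₀ with ⟨υ, hυred, hυeq⟩
      have h21 : ℓ u₀ = υ.length := by rw [hυeq]; exact hυred
      have h22 : ℓ (a * a₀⁻¹) = βb.length := by rw [hβbeq]; exact hβbred
      have hXρ : X = π (βb ++ υ) := by rw [wordProd_append, ← hβbeq, ← hυeq, hb]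
      have hρred : cs.IsReduced (βb ++ υ) := by
        unfold CoxeterSystem.IsReduced
        rw [← hXρ, List.length_append]
        omega
      have hl5 : ℓ (π (βb ++ υ) * s (l[k])) < ℓ (π (βb ++ υ)) := by
        rw [← hXρ]
        exact hdesc
      obtain ⟨δ, hδsub, hδlen, hδeq⟩ := exchange_right cs hρred (cs.isReflection_simple _) hl5
      obtain ⟨d1, d2, rfl, hd1, hd2⟩ := List.sublist_append_iff.mp hδsub
      rw [List.length_append, List.length_append] at hδlen
      by_cases hful : d2.length = υ.length
      · have hd2eq : d2 = υ := hd2.eq_of_length hful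
        have hXs : X * s (l[k]) = π d1 * u₀ := by
          rw [hXρ, hδeq, wordProd_append, hd2eq, ← hυeq]
        have hd1I : π d1 ∈ parabolic cs I :=
          wordProd_mem_parabolic cs (fun b hb => hβbI b (hd1.subset hb))
        refine ⟨π d1 * a₀, mul_mem hd1I ha₀I, ?_⟩
        rw [hstep, demStep_eq_of_not_lt cs (by omega), htake, wordProd_append, wordProd_singleton]
        have h23 : X = (X * s (l[k])) * s (l[k]) := by
          rw [mul_assoc, cs.simple_mul_simple_self, mul_one]
        rw [h23, hXs, ← hv, hu₀]
        group
      · exfalso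
        have h8 : d1.length = βb.length := by
          have h14 := hd1.length_le
          have h15 := hd2.length_le
          omega
        have hd1eq : d1 = βb := hd1.eq_of_length h8
        have hXs2 : X * s (l[k]) = (a * a₀⁻¹) * π d2 := by
          rw [hXρ, hδeq, wordProd_append, hd1eq, ← hβbeq]
        have hu0s : u₀ * s (l[k]) = π d2 := by
          have h17 : (a * a₀⁻¹) * (u₀ * s (l[k])) = (a * a₀⁻¹) * π d2 := by
            rw [← mul_assoc, ← hb]
            exact hXs2
          exact mul_left_cancel h17
        have hvs2 : v * s (l[k]) = a₀⁻¹ * π d2 := by rw [hva, mul_assoc, hu0s]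
        have h18 := cs.length_mul_le (a₀⁻¹) (π d2)
        have h19 := cs.length_wordProd_le d2
        have h20 : ℓ (v * s (l[k])) ≤ ℓ (a₀⁻¹) + d2.length := by
          rw [hvs2]
          omega
        omega

end Aux

/-- The maximal element of `W_I w W_J` is the Demazure product
`w_I * s_1 * ⋯ * s_l * w_J` for any reduced word `(s_1, …, s_l)` of `w`. -/
theorem max_doset_demazure (cs : CoxeterSystem M W) (I J : Set B)
    (hI : Finitary cs I) (hJ : Finitary cs J) (wI wJ : W)
    (hwI : IsMaxOf cs (parabolic cs I : Set W) wI)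
    (hwJ : IsMaxOf cs (parabolic cs J : Set W) wJ)
    (l : List B) (w : W) (hw : w = cs.wordProd l) (hred : l.length = cs.length w) :
    IsMaxOf cs (doset cs I J w) (dem cs (demWord cs wI l) wJ) := by
  obtain ⟨hγlen, hγeq⟩ := Classical.choose_spec (cs.exists_reduced_word wJ)
  set γ := Classical.choose (cs.exists_reduced_word wJ) with hγdef
  have hγred : cs.IsReduced γ := by
    unfold CoxeterSystem.IsReduced
    exact hγlen
  have hdem : dem cs (demWord cs wI l) wJ = demWord cs (demWord cs wI l) γ := rfl
  have hlred : cs.IsReduced l := by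
    unfold CoxeterSystem.IsReduced
    rw [← hw, hred]
  constructor
  · -- membership
    obtain ⟨a, haI, hXa⟩ := Aux.demWord_mem_coset cs hwI.1 hlred l.length le_rfl
    rw [List.take_length] at hXa
    obtain ⟨τ, hτsub, hτeq⟩ := Aux.demWord_eq_mul cs (demWord cs wI l) γ
    have hγJ : ∀ j ∈ γ, cs.simple j ∈ parabolic cs J :=
      Aux.simples_of_reduced_word_mem cs (cs.length wJ) wJ le_rfl hwJ.1 γ hγred hγeq
    have hcJ : cs.wordProd τ ∈ parabolic cs J :=
      Aux.wordProd_mem_of_simples cs (fun b hb => hγJ b (hτsub.subset hb))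
    refine ⟨a, haI, cs.wordProd τ, hcJ, ?_⟩
    rw [hdem, hτeq, hXa, hw, mul_assoc]
  · -- maximality
    rintro x ⟨a, haI, b, hbJ, rfl⟩
    have h1 : BruhatLE cs a wI := hwI.2 a haI
    have h2 : BruhatLE cs (a * cs.wordProd l) (demWord cs wI l) :=
      Aux.sub_mul_le_demWord cs (List.Sublist.refl l) h1
    rw [← hw] at h2
    have hb_le : BruhatLE cs b (cs.wordProd γ) := by
      rw [← hγeq]
      exact hwJ.2 b hbJ
    obtain ⟨τ, hτsub, -, hτeq⟩ := Aux.bruhat_subword cs hγred hb_le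
    have h3 := Aux.sub_mul_le_demWord cs hτsub h2
    rw [hτeq] at h3
    rw [hdem]
    exact h3

end CoxeterPaper
end
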